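/- arXiv:1605.05196 — 3 statements merged into one kernel-verified Lean document; each statement's English description precedes it below -/
import Mathlib

section
/- Let 0 < α < 1, X ⊆ ℂ compact, b ∈ X, and let μ be a finite complex measure on X × X with no mass at the point (b,b). Then for every δ > 0, the set E = {a ∈ ℂ : |a-b|^{1+α} · ∫∫ |z-w|^{1-α}/(|z-a||w-a|) d|μ|(z,w) < δ} has full area density at b, i.e. L²(E ∩ B(b,r))/(π r²) → 1 as r ↓ 0. -/
open MeasureTheory Metric Filter ENNReal

/-- `E` has full area density at `b`. -/
def FullAreaDensityAt (E : Set ℂ) (b : ℂ) : Prop :=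
  Tendsto (fun r : ℝ => volume (E ∩ closedBall b r) / ENNReal.ofReal (Real.pi * r ^ 2))
    (nhdsWithin 0 (Set.Ioi 0)) (nhds 1)

/-- The potential H̃(μ)(a) = ∫∫ |z-w|^{1-α} / (|z-a||w-a|) d|μ|(z,w), where σ
plays the role of the total variation |μ|. -/
noncomputable def Htilde (α : ℝ) (σ : Measure (ℂ × ℂ)) (a : ℂ) : ℝ≥0∞ :=
  ∫⁻ p, (ENNReal.ofReal (dist p.1 p.2)) ^ (1 - α) *
    ((ENNReal.ofReal (dist p.1 a))⁻¹ * (ENNReal.ofReal (dist p.2 a))⁻¹) ∂σ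

open Set

lemma hp_young {u v : ℝ≥0∞} {p q : ℝ} (hp : 1 < p) (hq : 1 < q) (hpq : 1/p + 1/q = 1) :
    u * v ≤ u ^ p + v ^ q := by
  have hp0 : (0:ℝ) < p := by linarith
  have hq0 : (0:ℝ) < q := by linarith
  rcases eq_or_ne u 0 with rfl | hu0
  · simp
  rcases eq_or_ne v 0 with rfl | hv0
  · simp
  rcases eq_or_ne u ⊤ with rfl | hut
  · have : (⊤:ℝ≥0∞) ^ p = ⊤ := ENNReal.top_rpow_of_pos hp0
    simp [this]
  rcases eq_or_ne v ⊤ with rfl | hvt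
  · have : (⊤:ℝ≥0∞) ^ q = ⊤ := ENNReal.top_rpow_of_pos hq0
    simp [this]
  rcases le_total (u ^ p) (v ^ q) with h | h
  · have hu : u ≤ v ^ (q / p) := by
      have h2 := ENNReal.rpow_le_rpow h (le_of_lt (by positivity : (0:ℝ) < 1/p))
      rwa [← ENNReal.rpow_mul, ← ENNReal.rpow_mul, mul_one_div,
        div_self hp0.ne', ENNReal.rpow_one, mul_one_div] at h2
    calc u * v ≤ v ^ (q/p) * v := mul_le_mul_left hu v
      _ = v ^ (q/p + 1) := by
          rw [ENNReal.rpow_add _ _ hv0 hvt, ENNReal.rpow_one]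
      _ = v ^ q := by
          congr 1
          field_simp at hpq ⊢
          nlinarith [hpq]
      _ ≤ u ^ p + v ^ q := le_add_self
  · have hv : v ≤ u ^ (p / q) := by
      have h2 := ENNReal.rpow_le_rpow h (le_of_lt (by positivity : (0:ℝ) < 1/q))
      rwa [← ENNReal.rpow_mul, ← ENNReal.rpow_mul, mul_one_div,
        div_self hq0.ne', ENNReal.rpow_one, mul_one_div] at h2
    calc u * v ≤ u * u ^ (p/q) := mul_le_mul_right hv u
      _ = u ^ (p/q + 1) := by
          rw [ENNReal.rpow_add _ _ hu0 hut, ENNReal.rpow_one, mul_comm]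
      _ = u ^ p := by
          congr 1
          field_simp at hpq ⊢
          nlinarith [hpq]
      _ ≤ u ^ p + v ^ q := le_self_add

lemma hp_aux {α : ℝ} (hα0 : 0 < α) (hα1 : α < 1) (x y : ℝ≥0∞) :
    y ^ (1-α) * (x⁻¹ * y⁻¹) ≤ (x ^ (1+α))⁻¹ + (y ^ (1+α))⁻¹ := by
  rcases eq_or_ne y 0 with rfl | hy0
  · rw [ENNReal.zero_rpow_of_pos (by linarith), zero_mul]
    exact zero_le
  rcases eq_or_ne y ⊤ with rfl | hyt
  · simp
  have key : y ^ (1-α) * (x⁻¹ * y⁻¹) = x⁻¹ * y ^ (-α) := by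
    rw [← ENNReal.rpow_neg_one y, mul_comm x⁻¹ (y ^ (-1:ℝ)), ← mul_assoc,
      ← ENNReal.rpow_add _ _ hy0 hyt, mul_comm]
    congr 1
    ring
  rw [key]
  have h := hp_young (u := x⁻¹) (v := y ^ (-α)) (p := 1+α) (q := (1+α)/α)
    (by linarith) ((one_lt_div hα0).2 (by linarith)) (by field_simp)
  calc x⁻¹ * y ^ (-α) ≤ (x⁻¹) ^ (1+α) + (y ^ (-α)) ^ ((1+α)/α) := h
    _ = (x ^ (1+α))⁻¹ + (y ^ (1+α))⁻¹ := by
        rw [ENNReal.inv_rpow, ← ENNReal.rpow_mul]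
        congr 2
        rw [← ENNReal.rpow_neg]
        congr 1
        field_simp

lemma hp_max_bound {α : ℝ} (hα0 : 0 < α) (hα1 : α < 1) {x y m : ℝ≥0∞} (hm : m ≤ x + y) :
    m ^ (1-α) * (x⁻¹ * y⁻¹) ≤ 4 * ((x ^ (1+α))⁻¹ + (y ^ (1+α))⁻¹) := by
  have h2 : m ≤ 2 * max x y := by
    calc m ≤ x + y := hm
      _ ≤ max x y + max x y := add_le_add (le_max_left _ _) (le_max_right _ _)
      _ = 2 * max x y := (two_mul _).symm
  have hmono : m ^ (1-α) ≤ (2:ℝ≥0∞) ^ (1-α) * (max x y) ^ (1-α) := by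
    rw [← ENNReal.mul_rpow_of_nonneg _ _ (by linarith : (0:ℝ) ≤ 1-α)]
    exact ENNReal.rpow_le_rpow h2 (by linarith)
  have h4 : (2:ℝ≥0∞) ^ ((1:ℝ)-α) ≤ 4 := by
    calc (2:ℝ≥0∞) ^ ((1:ℝ)-α) ≤ (2:ℝ≥0∞) ^ ((2:ℝ)) :=
          ENNReal.rpow_le_rpow_of_exponent_le (by norm_num) (by linarith)
      _ = 4 := by
          rw [show ((2:ℝ)) = ((2:ℕ):ℝ) by norm_num, ENNReal.rpow_natCast]
          norm_num
  have hmax : (max x y) ^ (1-α) * (x⁻¹ * y⁻¹) ≤ (x ^ (1+α))⁻¹ + (y ^ (1+α))⁻¹ := by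
    rcases le_total x y with h | h
    · rw [max_eq_right h]; exact hp_aux hα0 hα1 x y
    · rw [max_eq_left h, mul_comm x⁻¹ y⁻¹]
      rw [add_comm]
      exact hp_aux hα0 hα1 y x
  calc m ^ (1-α) * (x⁻¹ * y⁻¹)
      ≤ ((2:ℝ≥0∞) ^ ((1:ℝ)-α) * (max x y) ^ (1-α)) * (x⁻¹ * y⁻¹) :=
        mul_le_mul_left hmono _
    _ = (2:ℝ≥0∞) ^ ((1:ℝ)-α) * ((max x y) ^ (1-α) * (x⁻¹ * y⁻¹)) := by ring
    _ ≤ 4 * ((x ^ (1+α))⁻¹ + (y ^ (1+α))⁻¹) := mul_le_mul' h4 hmax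

lemma hp_vol_cb (w : ℂ) (s : ℝ) :
    volume (closedBall w s) = ENNReal.ofReal s ^ (2:ℝ) * NNReal.pi := by
  rw [Complex.volume_closedBall]
  congr 1
  rw [show ((2:ℝ)) = ((2:ℕ):ℝ) by norm_num, ENNReal.rpow_natCast]

lemma hp_ball_int {c : ℝ} (hc0 : 0 < c) (hc2 : c < 2) :
    ∃ C : ℝ≥0∞, C ≠ ⊤ ∧ ∀ (z b : ℂ) (r : ℝ), 0 < r →
      ∫⁻ a in closedBall b r, (ENNReal.ofReal (dist z a)) ^ (-c) ∂volume
        ≤ C * ENNReal.ofReal r ^ (2 - c) := by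
  set q : ℝ≥0∞ := 2 ^ (c - 2) with hq_def
  have hq1 : q < 1 := by
    have := ENNReal.rpow_lt_rpow_of_exponent_lt (x := 2) (by norm_num)
      (by norm_num) (by linarith : c - 2 < 0)
    simpa [ENNReal.rpow_zero] using this
  have h2top : ((2:ℝ≥0∞)) ^ c ≠ ⊤ := ENNReal.rpow_ne_top_of_nonneg hc0.le (by norm_num)
  have hqinv : ((1:ℝ≥0∞) - q)⁻¹ ≠ ⊤ := by
    have h10 : (1:ℝ≥0∞) - q ≠ 0 := by simpa [tsub_eq_zero_iff_le] using hq1.not_ge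
    exact ENNReal.inv_ne_top.2 h10
  refine ⟨(NNReal.pi : ℝ≥0∞) + (NNReal.pi : ℝ≥0∞) * 2 ^ c * (1 - q)⁻¹, ?_, ?_⟩
  · refine ENNReal.add_ne_top.2 ⟨ENNReal.coe_ne_top, ?_⟩
    exact ENNReal.mul_ne_top (ENNReal.mul_ne_top ENNReal.coe_ne_top h2top) hqinv
  intro z b r hr
  set R := ENNReal.ofReal r with hR_def
  have hR0 : R ≠ 0 := (ENNReal.ofReal_pos.2 hr).ne'
  have hRt : R ≠ ⊤ := ENNReal.ofReal_ne_top
  set f : ℂ → ℝ≥0∞ := fun a => (ENNReal.ofReal (dist z a)) ^ (-c) with hf_def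
  -- annulus bound
  have hann : ∀ s : ℝ, 0 < s → ∫⁻ a in closedBall z s \ closedBall z (s/2), f a ∂volume
      ≤ ((NNReal.pi : ℝ≥0∞) * 2 ^ c) * ENNReal.ofReal s ^ (2-c) := by
    intro s hs
    set S := ENNReal.ofReal s with hS_def
    have hS0 : S ≠ 0 := (ENNReal.ofReal_pos.2 hs).ne'
    have hSt : S ≠ ⊤ := ENNReal.ofReal_ne_top
    have hb1 : ∀ a ∈ closedBall z s \ closedBall z (s/2), f a ≤ (2:ℝ≥0∞) ^ c * S ^ (-c) := by
      intro a ha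
      have hlt : s/2 < dist a z := not_le.1 (fun h => ha.2 (mem_closedBall.2 h))
      have hle : ENNReal.ofReal (s/2) ≤ ENNReal.ofReal (dist z a) := by
        rw [dist_comm]; exact ENNReal.ofReal_le_ofReal hlt.le
      have h1 : f a ≤ (ENNReal.ofReal (s/2)) ^ (-c) := by
        rw [hf_def]
        simp only [ENNReal.rpow_neg]
        exact ENNReal.inv_le_inv.2 (ENNReal.rpow_le_rpow hle hc0.le)
      refine h1.trans (le_of_eq ?_)
      rw [ENNReal.ofReal_div_of_pos (by norm_num), ENNReal.ofReal_ofNat,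
        ENNReal.rpow_neg, ENNReal.div_rpow_of_nonneg _ _ hc0.le,
        ENNReal.inv_div (Or.inl h2top) (Or.inl (ENNReal.rpow_pos (by norm_num) (by norm_num)).ne'),
        div_eq_mul_inv, ← ENNReal.rpow_neg]
    calc ∫⁻ a in closedBall z s \ closedBall z (s/2), f a ∂volume
        ≤ ∫⁻ _ in closedBall z s \ closedBall z (s/2), (2:ℝ≥0∞) ^ c * S ^ (-c) ∂volume :=
          setLIntegral_mono measurable_const hb1
      _ = (2:ℝ≥0∞) ^ c * S ^ (-c) * volume (closedBall z s \ closedBall z (s/2)) :=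
          setLIntegral_const _ _
      _ ≤ (2:ℝ≥0∞) ^ c * S ^ (-c) * volume (closedBall z s) :=
          mul_le_mul_right (measure_mono diff_subset) _
      _ = (2:ℝ≥0∞) ^ c * S ^ (-c) * (S ^ (2:ℝ) * NNReal.pi) := by rw [hp_vol_cb]
      _ = ((NNReal.pi : ℝ≥0∞) * 2 ^ c) * (S ^ (-c) * S ^ (2:ℝ)) := by ring
      _ = ((NNReal.pi : ℝ≥0∞) * 2 ^ c) * S ^ (2-c) := by
          rw [← ENNReal.rpow_add _ _ hS0 hSt, show -c + 2 = 2 - c by ring]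
  -- far bound
  have hfar : ∫⁻ a in closedBall b r \ closedBall z r, f a ∂volume
      ≤ (NNReal.pi : ℝ≥0∞) * R ^ (2-c) := by
    have hb1 : ∀ a ∈ closedBall b r \ closedBall z r, f a ≤ R ^ (-c) := by
      intro a ha
      have hlt : r < dist a z := not_le.1 (fun h => ha.2 (mem_closedBall.2 h))
      have hle : R ≤ ENNReal.ofReal (dist z a) := by
        rw [dist_comm]; exact ENNReal.ofReal_le_ofReal hlt.le
      rw [hf_def]
      simp only [ENNReal.rpow_neg]
      exact ENNReal.inv_le_inv.2 (ENNReal.rpow_le_rpow hle hc0.le)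
    calc ∫⁻ a in closedBall b r \ closedBall z r, f a ∂volume
        ≤ ∫⁻ _ in closedBall b r \ closedBall z r, R ^ (-c) ∂volume :=
          setLIntegral_mono measurable_const hb1
      _ = R ^ (-c) * volume (closedBall b r \ closedBall z r) := setLIntegral_const _ _
      _ ≤ R ^ (-c) * volume (closedBall b r) := mul_le_mul_right (measure_mono diff_subset) _
      _ = R ^ (-c) * (R ^ (2:ℝ) * NNReal.pi) := by rw [hp_vol_cb]
      _ = (NNReal.pi : ℝ≥0∞) * (R ^ (-c) * R ^ (2:ℝ)) := by ring
      _ = (NNReal.pi : ℝ≥0∞) * R ^ (2-c) := by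
          rw [← ENNReal.rpow_add _ _ hR0 hRt, show -c + 2 = 2 - c by ring]
  -- near bound
  have hnear : ∫⁻ a in closedBall z r, f a ∂volume
      ≤ ((NNReal.pi : ℝ≥0∞) * 2 ^ c * (1-q)⁻¹) * R ^ (2-c) := by
    set A : ℕ → Set ℂ := fun n => closedBall z (r / 2^n) \ closedBall z (r / 2^(n+1)) with hA_def
    have hsub : closedBall z r ⊆ {z} ∪ ⋃ n, A n := by
      intro a ha
      rcases eq_or_ne a z with rfl | haz
      · exact Or.inl rfl
      right
      have hd : 0 < dist a z := dist_pos.2 haz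
      have hex : ∃ n : ℕ, r / 2^(n+1) < dist a z := by
        obtain ⟨n, hn⟩ := pow_unbounded_of_one_lt (r / dist a z) (one_lt_two (α := ℝ))
        refine ⟨n, ?_⟩
        rw [div_lt_iff₀ (by positivity)] at hn ⊢
        have h2 : (2:ℝ) ^ n ≤ 2 ^ (n+1) := by
          apply pow_le_pow_right₀ (by norm_num) (by omega)
        nlinarith
      have hspec := Nat.find_spec hex
      refine mem_iUnion.2 ⟨Nat.find hex, ?_, ?_⟩
      · show dist a z ≤ r / 2 ^ (Nat.find hex)
        rcases Nat.eq_zero_or_pos (Nat.find hex) with h0 | hpos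
        · rw [h0]; simpa using ha
        · obtain ⟨m, hm⟩ : ∃ m, Nat.find hex = m + 1 := ⟨Nat.find hex - 1, by omega⟩
          have := Nat.find_min hex (m := m) (by omega)
          rw [hm]
          exact not_lt.1 this
      · show a ∉ closedBall z (r / 2 ^ (Nat.find hex + 1))
        exact fun h => absurd (mem_closedBall.1 h) (not_le.2 hspec)
    have hterm : ∀ n : ℕ, ENNReal.ofReal (r / 2^n) ^ (2-c) = R ^ (2-c) * q ^ n := by
      intro n
      have h2n : (0:ℝ) < 2 ^ n := by positivity
      rw [ENNReal.ofReal_div_of_pos h2n, ENNReal.ofReal_pow (by norm_num), ENNReal.ofReal_ofNat,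
        ENNReal.div_rpow_of_nonneg _ _ (by linarith : (0:ℝ) ≤ 2 - c), div_eq_mul_inv]
      congr 1
      rw [← ENNReal.rpow_natCast (2:ℝ≥0∞) n, ← ENNReal.rpow_mul, mul_comm ((n:ℝ)),
        ENNReal.rpow_mul, ENNReal.rpow_natCast,
        ← ENNReal.rpow_natCast ((2:ℝ≥0∞) ^ ((2:ℝ)-c)) n, ← ENNReal.rpow_mul, ← ENNReal.rpow_neg,
        hq_def, ← ENNReal.rpow_natCast ((2:ℝ≥0∞) ^ (c-(2:ℝ))) n, ← ENNReal.rpow_mul]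
      congr 1
      ring
    calc ∫⁻ a in closedBall z r, f a ∂volume
        ≤ ∫⁻ a in {z} ∪ ⋃ n, A n, f a ∂volume := lintegral_mono_set hsub
      _ ≤ ∫⁻ a in ({z} : Set ℂ), f a ∂volume + ∫⁻ a in ⋃ n, A n, f a ∂volume := by
          refine le_trans (lintegral_mono' (Measure.restrict_union_le _ _) le_rfl) ?_
          rw [lintegral_add_measure]
      _ ≤ 0 + ∑' n, ∫⁻ a in A n, f a ∂volume := by
          gcongr
          · exact le_of_eq (setLIntegral_measure_zero _ _ (measure_singleton z))
          · exact lintegral_iUnion_le _ _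
      _ ≤ ∑' n, ((NNReal.pi : ℝ≥0∞) * 2 ^ c) * (R ^ (2-c) * q ^ n) := by
          rw [zero_add]
          refine ENNReal.tsum_le_tsum (fun n => ?_)
          have hs : (0:ℝ) < r / 2^n := by positivity
          have heq : r / 2^(n+1) = (r / 2^n) / 2 := by
            rw [div_div, ← pow_succ]
          rw [← hterm n]
          have := hann (r / 2^n) hs
          rwa [← heq] at this
      _ = ((NNReal.pi : ℝ≥0∞) * 2 ^ c * (1-q)⁻¹) * R ^ (2-c) := by
          rw [ENNReal.tsum_mul_left, ENNReal.tsum_mul_left, ENNReal.tsum_geometric]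
          ring
  calc ∫⁻ a in closedBall b r, f a ∂volume
      ≤ ∫⁻ a in (closedBall b r \ closedBall z r) ∪ closedBall z r, f a ∂volume :=
        lintegral_mono_set (fun a ha => by
          by_cases h : a ∈ closedBall z r
          · exact Or.inr h
          · exact Or.inl ⟨ha, h⟩)
    _ ≤ ∫⁻ a in closedBall b r \ closedBall z r, f a ∂volume
          + ∫⁻ a in closedBall z r, f a ∂volume := by
        refine le_trans (lintegral_mono' (Measure.restrict_union_le _ _) le_rfl) ?_
        rw [lintegral_add_measure]
    _ ≤ (NNReal.pi : ℝ≥0∞) * R ^ (2-c) + ((NNReal.pi : ℝ≥0∞) * 2 ^ c * (1-q)⁻¹) * R ^ (2-c) :=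
        add_le_add hfar hnear
    _ = ((NNReal.pi : ℝ≥0∞) + (NNReal.pi : ℝ≥0∞) * 2 ^ c * (1-q)⁻¹) * R ^ (2-c) := by ring

lemma hp_G_meas (α : ℝ) : Measurable (Function.uncurry (fun (a : ℂ) (p : ℂ × ℂ) =>
    (ENNReal.ofReal (dist p.1 p.2)) ^ (1 - α) *
      ((ENNReal.ofReal (dist p.1 a))⁻¹ * (ENNReal.ofReal (dist p.2 a))⁻¹))) := by
  have c1 : Continuous fun q : ℂ × (ℂ × ℂ) => (ENNReal.ofReal (dist q.2.1 q.2.2)) ^ (1 - α) :=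
    ENNReal.continuous_rpow_const.comp (ENNReal.continuous_ofReal.comp (by fun_prop))
  have c2 : Continuous fun q : ℂ × (ℂ × ℂ) => (ENNReal.ofReal (dist q.2.1 q.1))⁻¹ :=
    (ENNReal.continuous_ofReal.comp (by fun_prop)).inv
  have c3 : Continuous fun q : ℂ × (ℂ × ℂ) => (ENNReal.ofReal (dist q.2.2 q.1))⁻¹ :=
    (ENNReal.continuous_ofReal.comp (by fun_prop)).inv
  exact c1.measurable.mul (c2.measurable.mul c3.measurable)

/-- if σ = |μ| is a finite measure on X × X with no mass at (b,b),
then for every δ > 0 the set {a : |a-b|^{1+α} H̃(μ)(a) < δ} has full area density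
at b. -/
theorem Htilde_full_density (α : ℝ) (hα0 : 0 < α) (hα1 : α < 1)
    (X : Set ℂ) (hX : IsCompact X) (b : ℂ) (hb : b ∈ X)
    (σ : Measure (ℂ × ℂ)) [IsFiniteMeasure σ] (hsupp : σ ((X ×ˢ X)ᶜ) = 0)
    (hbb : σ {((b : ℂ), (b : ℂ))} = 0) (δ : ℝ) (hδ : 0 < δ) :
    FullAreaDensityAt
      {a : ℂ | (ENNReal.ofReal (dist a b)) ^ (1 + α) * Htilde α σ a <
        ENNReal.ofReal δ} b := by
  have h1α : (0:ℝ) < 1 + α := by linarith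
  have h1α2 : (1:ℝ) + α < 2 := by linarith
  obtain ⟨C₁, hC₁top, hC₁⟩ := hp_ball_int (c := 1+α) h1α h1α2
  obtain ⟨C₂, hC₂top, hC₂⟩ := hp_ball_int (c := 1) one_pos one_lt_two
  obtain ⟨D, hD⟩ := Metric.isBounded_iff.1 hX.isBounded
  set G : ℂ → ℂ × ℂ → ℝ≥0∞ := fun a p =>
    (ENNReal.ofReal (dist p.1 p.2)) ^ (1 - α) *
      ((ENNReal.ofReal (dist p.1 a))⁻¹ * (ENNReal.ofReal (dist p.2 a))⁻¹) with hG_def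
  have hGmeas : Measurable (Function.uncurry G) := hp_G_meas α
  set f : ℂ → ℝ≥0∞ := fun a => (ENNReal.ofReal (dist a b)) ^ (1 + α) * Htilde α σ a with hf_def
  have hfmeas : Measurable f := by
    apply Measurable.mul
    · exact (ENNReal.continuous_rpow_const.comp
        (ENNReal.continuous_ofReal.comp (by fun_prop))).measurable
    · exact hGmeas.lintegral_prod_right'
  -- uniform (near-diagonal) bound on the inner integral
  have hInear : ∀ (p : ℂ × ℂ) (r : ℝ), 0 < r →
      ∫⁻ a in closedBall b r, ENNReal.ofReal (dist a b) ^ (1+α) * G a p ∂volume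
        ≤ (8 * C₁) * ENNReal.ofReal r ^ (2:ℝ) := by
    intro p r hr
    set R := ENNReal.ofReal r with hR_def
    have hR0 : R ≠ 0 := (ENNReal.ofReal_pos.2 hr).ne'
    have hRt : R ≠ ⊤ := ENNReal.ofReal_ne_top
    have hpt : ∀ a ∈ closedBall b r, ENNReal.ofReal (dist a b) ^ (1+α) * G a p
        ≤ (R ^ (1+α) * 4) * (((ENNReal.ofReal (dist p.1 a)) ^ (1+α))⁻¹
            + ((ENNReal.ofReal (dist p.2 a)) ^ (1+α))⁻¹) := by
      intro a ha
      rw [mul_assoc]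
      refine mul_le_mul' ?_ ?_
      · exact ENNReal.rpow_le_rpow (ENNReal.ofReal_le_ofReal (mem_closedBall.1 ha)) h1α.le
      · refine hp_max_bound hα0 hα1 ?_
        calc ENNReal.ofReal (dist p.1 p.2)
            ≤ ENNReal.ofReal (dist p.1 a + dist p.2 a) := by
              apply ENNReal.ofReal_le_ofReal
              rw [dist_comm p.2 a]
              exact dist_triangle _ _ _
          _ = ENNReal.ofReal (dist p.1 a) + ENNReal.ofReal (dist p.2 a) :=
              ENNReal.ofReal_add dist_nonneg dist_nonneg
    have hmeas2 : Measurable fun a : ℂ => ((ENNReal.ofReal (dist p.1 a)) ^ (1+α))⁻¹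
        + ((ENNReal.ofReal (dist p.2 a)) ^ (1+α))⁻¹ := by
      apply Measurable.add
      all_goals
        exact ((ENNReal.continuous_rpow_const.comp
          (ENNReal.continuous_ofReal.comp (by fun_prop))).inv).measurable
    calc ∫⁻ a in closedBall b r, ENNReal.ofReal (dist a b) ^ (1+α) * G a p ∂volume
        ≤ ∫⁻ a in closedBall b r, (R ^ (1+α) * 4) * (((ENNReal.ofReal (dist p.1 a)) ^ (1+α))⁻¹
            + ((ENNReal.ofReal (dist p.2 a)) ^ (1+α))⁻¹) ∂volume :=
          setLIntegral_mono (measurable_const.mul hmeas2) hpt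
      _ = (R ^ (1+α) * 4) * ∫⁻ a in closedBall b r, (((ENNReal.ofReal (dist p.1 a)) ^ (1+α))⁻¹
            + ((ENNReal.ofReal (dist p.2 a)) ^ (1+α))⁻¹) ∂volume :=
          lintegral_const_mul' _ _ (by
            exact ENNReal.mul_ne_top (ENNReal.rpow_ne_top_of_nonneg h1α.le hRt) (by norm_num))
      _ ≤ (R ^ (1+α) * 4) * (C₁ * R ^ (1-α) + C₁ * R ^ (1-α)) := by
          refine mul_le_mul_right ?_ _
          rw [lintegral_add_left (by
            exact ((ENNReal.continuous_rpow_const.comp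
              (ENNReal.continuous_ofReal.comp (by fun_prop))).inv).measurable)]
          refine add_le_add ?_ ?_
          · have := hC₁ p.1 b r hr
            simp only [ENNReal.rpow_neg] at this
            rw [show (2:ℝ) - (1+α) = 1 - α by ring] at this
            exact this
          · have := hC₁ p.2 b r hr
            simp only [ENNReal.rpow_neg] at this
            rw [show (2:ℝ) - (1+α) = 1 - α by ring] at this
            exact this
      _ = (8 * C₁) * (R ^ (1+α) * R ^ (1-α)) := by ring
      _ = (8 * C₁) * R ^ (2:ℝ) := by
          rw [← ENNReal.rpow_add _ _ hR0 hRt, show (1+α) + (1-α) = (2:ℝ) by ring]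
  -- far bound
  have hIfar : ∀ (z w : ℂ) (r η : ℝ), 0 < r → 0 < η → r ≤ η/2 → η < dist z b → dist z w ≤ D →
      ∫⁻ a in closedBall b r, ENNReal.ofReal (dist a b) ^ (1+α) * G a (z, w) ∂volume
        ≤ (ENNReal.ofReal D ^ (1-α) * (ENNReal.ofReal (η/2))⁻¹ * C₂)
            * ENNReal.ofReal r ^ ((2:ℝ)+α) := by
    intro z w r η hr hη hrη hzb hzw
    set R := ENNReal.ofReal r with hR_def
    have hR0 : R ≠ 0 := (ENNReal.ofReal_pos.2 hr).ne'
    have hRt : R ≠ ⊤ := ENNReal.ofReal_ne_top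
    have hpt : ∀ a ∈ closedBall b r, ENNReal.ofReal (dist a b) ^ (1+α) * G a (z, w)
        ≤ (R ^ (1+α) * (ENNReal.ofReal D ^ (1-α) * (ENNReal.ofReal (η/2))⁻¹))
            * (ENNReal.ofReal (dist w a))⁻¹ := by
      intro a ha
      have hab : dist a b ≤ r := mem_closedBall.1 ha
      have hza : η/2 ≤ dist z a := by
        have h1 := dist_triangle z a b
        have h2 : dist a b = dist b a := dist_comm a b
        linarith
      have hx : (ENNReal.ofReal (dist z a))⁻¹ ≤ (ENNReal.ofReal (η/2))⁻¹ :=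
        ENNReal.inv_le_inv.2 (ENNReal.ofReal_le_ofReal hza)
      have hm : ENNReal.ofReal (dist z w) ^ (1-α) ≤ ENNReal.ofReal D ^ (1-α) :=
        ENNReal.rpow_le_rpow (ENNReal.ofReal_le_ofReal hzw) (by linarith)
      calc ENNReal.ofReal (dist a b) ^ (1+α) * G a (z, w)
          ≤ R ^ (1+α) * (ENNReal.ofReal D ^ (1-α)
              * ((ENNReal.ofReal (η/2))⁻¹ * (ENNReal.ofReal (dist w a))⁻¹)) := by
            refine mul_le_mul' (ENNReal.rpow_le_rpow (ENNReal.ofReal_le_ofReal hab) h1α.le) ?_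
            exact mul_le_mul' hm (mul_le_mul_left hx _)
        _ = (R ^ (1+α) * (ENNReal.ofReal D ^ (1-α) * (ENNReal.ofReal (η/2))⁻¹))
              * (ENNReal.ofReal (dist w a))⁻¹ := by ring
    calc ∫⁻ a in closedBall b r, ENNReal.ofReal (dist a b) ^ (1+α) * G a (z, w) ∂volume
        ≤ ∫⁻ a in closedBall b r,
            (R ^ (1+α) * (ENNReal.ofReal D ^ (1-α) * (ENNReal.ofReal (η/2))⁻¹))
              * (ENNReal.ofReal (dist w a))⁻¹ ∂volume := by
          refine setLIntegral_mono (measurable_const.mul ?_) hpt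
          exact ((ENNReal.continuous_ofReal.comp (by fun_prop)).inv).measurable
      _ = (R ^ (1+α) * (ENNReal.ofReal D ^ (1-α) * (ENNReal.ofReal (η/2))⁻¹))
            * ∫⁻ a in closedBall b r, (ENNReal.ofReal (dist w a))⁻¹ ∂volume := by
          refine lintegral_const_mul' _ _ ?_
          refine ENNReal.mul_ne_top (ENNReal.rpow_ne_top_of_nonneg h1α.le hRt) ?_
          refine ENNReal.mul_ne_top (ENNReal.rpow_ne_top_of_nonneg (by linarith)
            ENNReal.ofReal_ne_top) ?_
          exact ENNReal.inv_ne_top.2 (ENNReal.ofReal_pos.2 (by linarith)).ne'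
      _ ≤ (R ^ (1+α) * (ENNReal.ofReal D ^ (1-α) * (ENNReal.ofReal (η/2))⁻¹))
            * (C₂ * R ^ ((2:ℝ)-1)) := by
          refine mul_le_mul_right ?_ _
          have := hC₂ w b r hr
          simp only [ENNReal.rpow_neg_one] at this
          exact this
      _ = (ENNReal.ofReal D ^ (1-α) * (ENNReal.ofReal (η/2))⁻¹ * C₂)
            * (R ^ (1+α) * R ^ ((2:ℝ)-1)) := by ring
      _ = (ENNReal.ofReal D ^ (1-α) * (ENNReal.ofReal (η/2))⁻¹ * C₂) * R ^ ((2:ℝ)+α) := by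
          rw [← ENNReal.rpow_add _ _ hR0 hRt, show (1+α) + ((2:ℝ)-1) = (2:ℝ)+α by ring]

  -- swap the order of integration
  have hswap : ∀ r : ℝ, 0 < r → ∫⁻ a in closedBall b r, f a ∂volume
      = ∫⁻ p, ∫⁻ a in closedBall b r,
          ENNReal.ofReal (dist a b) ^ (1+α) * G a p ∂volume ∂σ := by
    intro r hr
    have h1 : ∀ a : ℂ, f a = ∫⁻ p, ENNReal.ofReal (dist a b) ^ (1+α) * G a p ∂σ := by
      intro a
      exact (lintegral_const_mul' _ _
        (ENNReal.rpow_ne_top_of_nonneg h1α.le ENNReal.ofReal_ne_top)).symm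
    calc ∫⁻ a in closedBall b r, f a ∂volume
        = ∫⁻ a in closedBall b r, ∫⁻ p,
            ENNReal.ofReal (dist a b) ^ (1+α) * G a p ∂σ ∂volume := lintegral_congr h1
      _ = _ := by
          refine lintegral_lintegral_swap ?_
          refine Measurable.aemeasurable ?_
          exact ((ENNReal.continuous_rpow_const.comp
            (ENNReal.continuous_ofReal.comp (by fun_prop))).measurable).mul hGmeas
  -- total bound
  have hTOT : ∀ (η r : ℝ), 0 < η → 0 < r → r ≤ η/2 →
      ∫⁻ a in closedBall b r, f a ∂volume ≤
        ((8*C₁) * σ (closedBall ((b,b) : ℂ × ℂ) η)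
          + ((ENNReal.ofReal D ^ (1-α) * (ENNReal.ofReal (η/2))⁻¹ * C₂) * σ Set.univ)
              * ENNReal.ofReal r ^ α)
          * ENNReal.ofReal r ^ (2:ℝ) := by
    intro η r hη hr hrη
    set R := ENNReal.ofReal r with hR_def
    have hR0 : R ≠ 0 := (ENNReal.ofReal_pos.2 hr).ne'
    have hRt : R ≠ ⊤ := ENNReal.ofReal_ne_top
    set N : Set (ℂ × ℂ) := closedBall ((b,b) : ℂ × ℂ) η with hN_def
    have hNmeas : MeasurableSet N := measurableSet_closedBall
    set I : ℂ × ℂ → ℝ≥0∞ := fun p =>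
      ∫⁻ a in closedBall b r, ENNReal.ofReal (dist a b) ^ (1+α) * G a p ∂volume with hI_def
    set K : ℝ≥0∞ := ENNReal.ofReal D ^ (1-α) * (ENNReal.ofReal (η/2))⁻¹ * C₂ with hK_def
    have hb1 : ∫⁻ p in N, I p ∂σ ≤ ((8*C₁) * R ^ (2:ℝ)) * σ N := by
      calc ∫⁻ p in N, I p ∂σ ≤ ∫⁻ _ in N, (8*C₁) * R ^ (2:ℝ) ∂σ :=
            setLIntegral_mono measurable_const (fun p _ => hInear p r hr)
        _ = ((8*C₁) * R ^ (2:ℝ)) * σ N := setLIntegral_const _ _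
    have hae : ∀ᵐ p ∂σ, p ∈ X ×ˢ X := by
      rw [ae_iff]
      exact hsupp
    have hb2 : ∫⁻ p in Nᶜ, I p ∂σ ≤ (K * R ^ ((2:ℝ)+α)) * σ Set.univ := by
      have hptw : ∀ᵐ p ∂σ, p ∈ Nᶜ → I p ≤ K * R ^ ((2:ℝ)+α) := by
        filter_upwards [hae] with p hpX hpN
        have hdist : η < max (dist p.1 b) (dist p.2 b) := by
          rw [hN_def, mem_compl_iff, mem_closedBall, not_le, Prod.dist_eq] at hpN
          exact hpN
        rcases lt_max_iff.1 hdist with h | h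
        · have h2 := hIfar p.1 p.2 r η hr hη hrη h (hD hpX.1 hpX.2)
          rw [hI_def]
          simpa [hK_def] using h2
        · have hsymm : ∀ a : ℂ, ENNReal.ofReal (dist a b) ^ (1+α) * G a p
              = ENNReal.ofReal (dist a b) ^ (1+α) * G a (p.2, p.1) := by
            intro a
            simp only [hG_def]
            rw [dist_comm p.1 p.2]
            ring
          have h2 := hIfar p.2 p.1 r η hr hη hrη h (hD hpX.2 hpX.1)
          rw [hI_def]
          simp only [hsymm]
          simpa [hK_def] using h2
      calc ∫⁻ p in Nᶜ, I p ∂σ ≤ ∫⁻ _ in Nᶜ, K * R ^ ((2:ℝ)+α) ∂σ :=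
            setLIntegral_mono_ae measurable_const.aemeasurable hptw
        _ = (K * R ^ ((2:ℝ)+α)) * σ Nᶜ := setLIntegral_const _ _
        _ ≤ (K * R ^ ((2:ℝ)+α)) * σ Set.univ :=
            mul_le_mul_right (measure_mono (subset_univ _)) _
    calc ∫⁻ a in closedBall b r, f a ∂volume = ∫⁻ p, I p ∂σ := hswap r hr
      _ = ∫⁻ p in N, I p ∂σ + ∫⁻ p in Nᶜ, I p ∂σ := (lintegral_add_compl _ hNmeas).symm
      _ ≤ ((8*C₁) * R ^ (2:ℝ)) * σ N + (K * R ^ ((2:ℝ)+α)) * σ Set.univ := add_le_add hb1 hb2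
      _ = ((8*C₁) * σ N + (K * σ Set.univ) * R ^ α) * R ^ (2:ℝ) := by
          rw [show ((2:ℝ)+α) = α + 2 by ring, ENNReal.rpow_add _ _ hR0 hRt]
          ring
  -- Chebyshev
  set Ec : Set ℂ := {a : ℂ | ENNReal.ofReal δ ≤ f a} with hEc_def
  have hEcmeas : MeasurableSet Ec := measurableSet_le measurable_const hfmeas
  have hcheb : ∀ r : ℝ, 0 < r → ENNReal.ofReal δ * volume (Ec ∩ closedBall b r)
      ≤ ∫⁻ a in closedBall b r, f a ∂volume := by
    intro r hr
    have h1 := mul_meas_ge_le_lintegral₀ (μ := volume.restrict (closedBall b r))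
      hfmeas.aemeasurable (ENNReal.ofReal δ)
    rwa [Measure.restrict_apply hEcmeas] at h1
  -- volume of balls
  have hVeq : ∀ r : ℝ, 0 < r →
      ENNReal.ofReal (Real.pi * r^2) = ENNReal.ofReal r ^ (2:ℝ) * NNReal.pi := by
    intro r hr
    rw [ENNReal.ofReal_mul Real.pi_pos.le, ENNReal.ofReal_pow hr.le,
      ← NNReal.coe_real_pi, ENNReal.ofReal_coe_nnreal, mul_comm]
    congr 1
    rw [show ((2:ℝ)) = ((2:ℕ):ℝ) by norm_num, ENNReal.rpow_natCast]
  -- the normalized measure of Ec tends to 0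
  have hφ : Tendsto (fun r : ℝ =>
      volume (Ec ∩ closedBall b r) / ENNReal.ofReal (Real.pi * r ^ 2))
      (nhdsWithin 0 (Set.Ioi 0)) (nhds 0) := by
    rw [ENNReal.tendsto_nhds_zero]
    intro ε hε
    set ε' : ℝ≥0∞ := min ε 1 with hε'_def
    have hε'0 : ε' ≠ 0 := (lt_min hε zero_lt_one).ne'
    have hε't : ε' ≠ ⊤ := ne_top_of_le_ne_top one_ne_top (min_le_right _ _)
    have hπ0 : ((NNReal.pi : ℝ≥0∞)) ≠ 0 := by
      simp only [Ne, ENNReal.coe_eq_zero]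
      exact fun h => Real.pi_pos.ne' (by rw [← NNReal.coe_real_pi, h, NNReal.coe_zero])
    set ε₀ : ℝ≥0∞ := ENNReal.ofReal δ * ε' * NNReal.pi with hε₀_def
    have hε₀0 : ε₀ ≠ 0 :=
      mul_ne_zero (mul_ne_zero (ENNReal.ofReal_pos.2 hδ).ne' hε'0) hπ0
    have hhalf0 : ε₀ / 2 ≠ 0 := (ENNReal.div_pos hε₀0 (by norm_num)).ne'
    -- choose η
    have hanti : Antitone (fun n : ℕ => closedBall ((b,b) : ℂ × ℂ) (1/((n:ℝ)+1))) := by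
      intro n m hnm
      apply closedBall_subset_closedBall
      have hc : (n:ℝ) ≤ (m:ℝ) := Nat.cast_le.2 hnm
      apply one_div_le_one_div_of_le (by positivity)
      linarith
    have hiInter : (⋂ n : ℕ, closedBall ((b,b) : ℂ × ℂ) (1/((n:ℝ)+1))) = {((b,b) : ℂ × ℂ)} := by
      ext p
      simp only [mem_iInter, mem_closedBall, mem_singleton_iff]
      constructor
      · intro h
        rw [← dist_le_zero]
        by_contra hne
        push_neg at hne
        obtain ⟨n, hn⟩ := exists_nat_one_div_lt hne
        exact absurd (h n) (not_le.2 hn)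
      · rintro rfl
        intro n
        rw [dist_self]
        positivity
    have hseq : Tendsto (fun n : ℕ => σ (closedBall ((b,b) : ℂ × ℂ) (1/((n:ℝ)+1))))
        atTop (nhds 0) := by
      have h1 := tendsto_measure_iInter_atTop (μ := σ)
        (fun n => measurableSet_closedBall.nullMeasurableSet) hanti
        ⟨0, measure_ne_top σ _⟩
      rw [hiInter, hbb] at h1
      exact h1
    have h8top : (8 : ℝ≥0∞) * C₁ + 1 ≠ ⊤ :=
      ENNReal.add_ne_top.2 ⟨ENNReal.mul_ne_top (by norm_num) hC₁top, one_ne_top⟩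
    have h8ne : (8 : ℝ≥0∞) * C₁ + 1 ≠ 0 := (lt_of_lt_of_le zero_lt_one le_add_self).ne'
    have ht0 : 0 < ε₀ / 2 / (8 * C₁ + 1) := ENNReal.div_pos hhalf0 h8top
    obtain ⟨n₀, hn₀⟩ := (hseq.eventually_lt_const ht0).exists
    set η : ℝ := 1/((n₀:ℝ)+1) with hη_def
    have hη0 : 0 < η := by positivity
    have hσN : (8*C₁) * σ (closedBall ((b,b) : ℂ × ℂ) η) ≤ ε₀ / 2 := by
      calc (8*C₁) * σ (closedBall ((b,b) : ℂ × ℂ) η)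
          ≤ (8*C₁+1) * (ε₀ / 2 / (8 * C₁ + 1)) :=
            mul_le_mul' le_self_add (le_of_lt hn₀)
        _ = ε₀ / 2 := ENNReal.mul_div_cancel h8ne h8top
    set K : ℝ≥0∞ := (ENNReal.ofReal D ^ (1-α) * (ENNReal.ofReal (η/2))⁻¹ * C₂) * σ Set.univ
      with hK_def
    have hKtop : K ≠ ⊤ := by
      refine ENNReal.mul_ne_top (ENNReal.mul_ne_top (ENNReal.mul_ne_top
        (ENNReal.rpow_ne_top_of_nonneg (by linarith) ENNReal.ofReal_ne_top) ?_) hC₂top)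
        (measure_ne_top σ _)
      exact ENNReal.inv_ne_top.2 (ENNReal.ofReal_pos.2 (by linarith)).ne'
    have hKlim : Tendsto (fun r : ℝ => K * ENNReal.ofReal r ^ α)
        (nhdsWithin 0 (Set.Ioi 0)) (nhds 0) := by
      have h1 : Tendsto (fun r : ℝ => ENNReal.ofReal r ^ α) (nhds 0)
          (nhds ((ENNReal.ofReal 0) ^ α)) :=
        (ENNReal.continuous_rpow_const.comp ENNReal.continuous_ofReal).tendsto 0
      rw [ENNReal.ofReal_zero, ENNReal.zero_rpow_of_pos hα0] at h1
      have h2 := ENNReal.Tendsto.const_mul (a := K)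
        (h1.mono_left (nhdsWithin_le_nhds (s := Set.Ioi (0:ℝ)))) (Or.inr hKtop)
      simpa using h2
    have hev2 : ∀ᶠ r in nhdsWithin 0 (Set.Ioi 0),
        K * ENNReal.ofReal r ^ α ≤ ε₀ / 2 :=
      hKlim.eventually_le_const (ENNReal.div_pos hε₀0 (by norm_num))
    have hev1 : ∀ᶠ r in nhdsWithin 0 (Set.Ioi 0), r ∈ Set.Ioc 0 (η/2) :=
      Ioc_mem_nhdsGT (by positivity)
    filter_upwards [hev1, hev2] with r hr1 hr2
    have hr : 0 < r := hr1.1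
    have key : ENNReal.ofReal δ * volume (Ec ∩ closedBall b r)
        ≤ ENNReal.ofReal δ * (ε' * ENNReal.ofReal (Real.pi * r^2)) := by
      calc ENNReal.ofReal δ * volume (Ec ∩ closedBall b r)
          ≤ ∫⁻ a in closedBall b r, f a ∂volume := hcheb r hr
        _ ≤ ((8*C₁) * σ (closedBall ((b,b) : ℂ × ℂ) η)
              + K * ENNReal.ofReal r ^ α) * ENNReal.ofReal r ^ (2:ℝ) := by
            exact hTOT η r hη0 hr hr1.2
        _ ≤ (ε₀/2 + ε₀/2) * ENNReal.ofReal r ^ (2:ℝ) :=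
            mul_le_mul_left (add_le_add hσN hr2) _
        _ = ε₀ * ENNReal.ofReal r ^ (2:ℝ) := by rw [ENNReal.add_halves]
        _ = ENNReal.ofReal δ * (ε' * ENNReal.ofReal (Real.pi * r^2)) := by
            rw [hVeq r hr, hε₀_def]
            ring
    have hle : volume (Ec ∩ closedBall b r) ≤ ε' * ENNReal.ofReal (Real.pi * r^2) :=
      (ENNReal.mul_le_mul_iff_right (ENNReal.ofReal_pos.2 hδ).ne' ENNReal.ofReal_ne_top).1 key
    have hd0 : ENNReal.ofReal (Real.pi * r^2) ≠ 0 :=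
      (ENNReal.ofReal_pos.2 (by positivity)).ne'
    rw [ENNReal.div_le_iff hd0 ENNReal.ofReal_ne_top]
    exact hle.trans (mul_le_mul_left (min_le_left _ _) _)
  -- identify the target set
  have hEq : {a : ℂ | (ENNReal.ofReal (dist a b)) ^ (1 + α) * Htilde α σ a <
      ENNReal.ofReal δ} = Ecᶜ := by
    ext a
    simp only [hEc_def, mem_setOf_eq, mem_compl_iff, not_le]
    exact Iff.rfl
  unfold FullAreaDensityAt
  rw [hEq]
  -- squeeze
  have hlower : Tendsto (fun r : ℝ => 1 -
      volume (Ec ∩ closedBall b r) / ENNReal.ofReal (Real.pi * r ^ 2))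
      (nhdsWithin 0 (Set.Ioi 0)) (nhds 1) := by
    have h1 := ENNReal.Tendsto.sub
      (tendsto_const_nhds : Tendsto (fun _ : ℝ => (1:ℝ≥0∞)) (nhdsWithin 0 (Set.Ioi 0)) (nhds 1))
      hφ (Or.inl one_ne_top)
    simpa using h1
  refine tendsto_of_tendsto_of_tendsto_of_le_of_le' hlower tendsto_const_nhds ?_ ?_
  · filter_upwards [self_mem_nhdsWithin] with r hr
    have hr0 : 0 < r := hr
    have hV : ENNReal.ofReal (Real.pi * r^2) = volume (closedBall b r) := by
      rw [hVeq r hr0, hp_vol_cb]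
    have hd0 : ENNReal.ofReal (Real.pi * r^2) ≠ 0 :=
      (ENNReal.ofReal_pos.2 (by positivity)).ne'
    rw [tsub_le_iff_right, ENNReal.div_add_div_same]
    calc (1:ℝ≥0∞) = ENNReal.ofReal (Real.pi * r^2) / ENNReal.ofReal (Real.pi * r^2) :=
          (ENNReal.div_self hd0 ENNReal.ofReal_ne_top).symm
      _ ≤ (volume (Ecᶜ ∩ closedBall b r) + volume (Ec ∩ closedBall b r))
            / ENNReal.ofReal (Real.pi * r^2) := by
          refine ENNReal.div_le_div_right ?_ _
          rw [hV]
          refine le_trans (measure_mono ?_) (measure_union_le _ _)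
          intro a ha
          by_cases h : a ∈ Ec
          · exact Or.inr ⟨h, ha⟩
          · exact Or.inl ⟨h, ha⟩
  · filter_upwards [self_mem_nhdsWithin] with r hr
    have hr0 : 0 < r := hr
    have hV : ENNReal.ofReal (Real.pi * r^2) = volume (closedBall b r) := by
      rw [hVeq r hr0, hp_vol_cb]
    have hd0 : ENNReal.ofReal (Real.pi * r^2) ≠ 0 :=
      (ENNReal.ofReal_pos.2 (by positivity)).ne'
    calc volume (Ecᶜ ∩ closedBall b r) / ENNReal.ofReal (Real.pi * r^2)
        ≤ ENNReal.ofReal (Real.pi * r^2) / ENNReal.ofReal (Real.pi * r^2) := by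
          refine ENNReal.div_le_div_right ?_ _
          rw [hV]
          exact measure_mono inter_subset_right
      _ = 1 := ENNReal.div_self hd0 ENNReal.ofReal_ne_top
end

section
/- Let 0 < α < 1, X ⊆ ℂ compact, b ∈ X, and let μ be a finite complex measure on X × X with no mass at (b,b). Then there exists a constant M > 0 such that the set E = {a ∈ ℂ : |a-b| · ∫∫ |z-w|/(|z-a||w-a|) d|μ|(z,w) < M} has full area density at b. -/
open MeasureTheory Metric Filter ENNReal


open MeasureTheory Metric Filter ENNReal Set Topology

lemma ofReal_mul_inv_le {x y c : ℝ} (hc : 0 ≤ c) (h : x ≤ c * y) :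
    ENNReal.ofReal x * (ENNReal.ofReal y)⁻¹ ≤ ENNReal.ofReal c := by
  rcases le_or_gt y 0 with hy | hy
  · have hx : x ≤ 0 := h.trans (mul_nonpos_iff.2 (Or.inl ⟨hc, hy⟩))
    simp [ENNReal.ofReal_eq_zero.2 hx]
  · have hy0 : ENNReal.ofReal y ≠ 0 := by simp [hy]
    calc ENNReal.ofReal x * (ENNReal.ofReal y)⁻¹
        ≤ ENNReal.ofReal (c * y) * (ENNReal.ofReal y)⁻¹ := by
          exact mul_le_mul_left (ENNReal.ofReal_le_ofReal h) _
      _ = ENNReal.ofReal c * (ENNReal.ofReal y * (ENNReal.ofReal y)⁻¹) := by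
          rw [ENNReal.ofReal_mul hc, mul_assoc]
      _ ≤ ENNReal.ofReal c * 1 := by
          gcongr
          rw [← div_eq_mul_inv]; exact ENNReal.div_self_le_one
      _ = ENNReal.ofReal c := mul_one _

lemma volC (w : ℂ) {s : ℝ} (hs : 0 ≤ s) :
    volume (closedBall w s) = ENNReal.ofReal (Real.pi * s ^ 2) := by
  rw [Complex.volume_closedBall, ← ENNReal.ofReal_coe_nnreal, NNReal.coe_real_pi,
    ← ENNReal.ofReal_pow hs, ← ENNReal.ofReal_mul (pow_nonneg hs 2), mul_comm]

lemma lintegral_inv_dist_ball (w : ℂ) {r : ℝ} (hr : 0 < r) :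
    ∫⁻ a in closedBall w r, (ENNReal.ofReal (dist w a))⁻¹ ∂volume
      ≤ ENNReal.ofReal (2 * Real.pi * r) := by
  have hstep : ∫⁻ a in closedBall w r, (ENNReal.ofReal (dist w a))⁻¹ ∂volume
      = ∫⁻ a in closedBall w r, ENNReal.ofReal ((dist w a)⁻¹) ∂volume := by
    refine lintegral_congr_ae (ae_restrict_of_ae ?_)
    have hw : ∀ᵐ a : ℂ ∂volume, a ≠ w := by
      rw [ae_iff]; simpa using measure_singleton (w : ℂ)
    filter_upwards [hw] with a ha
    rw [ENNReal.ofReal_inv_of_pos (dist_pos.2 (Ne.symm ha))]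
  rw [hstep]
  have hlayer := lintegral_eq_lintegral_meas_le (volume.restrict (closedBall w r))
      (f := fun a => (dist w a)⁻¹)
      (Eventually.of_forall fun a => inv_nonneg.2 dist_nonneg)
      ((measurable_const.dist measurable_id).inv.aemeasurable)
  rw [hlayer]
  have hsplit : (Ioi (0:ℝ)) = Ioc (0:ℝ) r⁻¹ ∪ Ioi r⁻¹ :=
    (Set.Ioc_union_Ioi_eq_Ioi (le_of_lt (inv_pos.2 hr))).symm
  rw [hsplit, lintegral_union measurableSet_Ioi Set.Ioc_disjoint_Ioi_same]
  have h1 : ∫⁻ t in Ioc (0:ℝ) r⁻¹,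
      (volume.restrict (closedBall w r)) {a | t ≤ (dist w a)⁻¹} ∂volume
        ≤ ENNReal.ofReal (Real.pi * r) := by
    calc ∫⁻ t in Ioc (0:ℝ) r⁻¹,
        (volume.restrict (closedBall w r)) {a | t ≤ (dist w a)⁻¹} ∂volume
        ≤ ∫⁻ _t in Ioc (0:ℝ) r⁻¹, ENNReal.ofReal (Real.pi * r ^ 2) ∂volume := by
          refine lintegral_mono fun t => ?_
          rw [Measure.restrict_apply' measurableSet_closedBall]
          refine le_trans (measure_mono Set.inter_subset_right) ?_
          rw [volC w hr.le]
      _ = ENNReal.ofReal (Real.pi * r ^ 2) * ENNReal.ofReal r⁻¹ := by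
          rw [lintegral_const, Measure.restrict_apply MeasurableSet.univ, Set.univ_inter,
            Real.volume_Ioc, sub_zero]
      _ = ENNReal.ofReal (Real.pi * r) := by
          rw [← ENNReal.ofReal_mul (by positivity)]
          congr 1
          field_simp
  have h2 : ∫⁻ t in Ioi r⁻¹,
      (volume.restrict (closedBall w r)) {a | t ≤ (dist w a)⁻¹} ∂volume
        ≤ ENNReal.ofReal (Real.pi * r) := by
    have hb : ∀ t ∈ Ioi r⁻¹, (volume.restrict (closedBall w r)) {a | t ≤ (dist w a)⁻¹}
        ≤ ENNReal.ofReal (Real.pi * (t ^ (-2:ℝ))) := by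
      intro t ht
      have ht0 : 0 < t := lt_trans (inv_pos.2 hr) ht
      have hsub : {a : ℂ | t ≤ (dist w a)⁻¹} ⊆ closedBall w t⁻¹ := by
        intro a ha
        simp only [Set.mem_setOf_eq] at ha
        have hd0 : 0 < dist w a := by
          by_contra hc
          push_neg at hc
          have : dist w a = 0 := le_antisymm hc dist_nonneg
          rw [this] at ha; simp at ha; exact absurd ha (not_le.2 ht0)
        rw [mem_closedBall, dist_comm]
        rw [le_inv_comm₀ ht0 hd0] at ha
        exact ha
      refine le_trans (le_trans (Measure.restrict_apply_le _ _) (measure_mono hsub)) ?_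
      rw [volC w (by positivity)]
      refine le_of_eq ?_
      congr 1
      rw [Real.rpow_neg ht0.le, Real.rpow_two, inv_pow]
    calc ∫⁻ t in Ioi r⁻¹, (volume.restrict (closedBall w r)) {a | t ≤ (dist w a)⁻¹} ∂volume
        ≤ ∫⁻ t in Ioi r⁻¹, ENNReal.ofReal (Real.pi * (t ^ (-2:ℝ))) ∂volume :=
          setLIntegral_mono' measurableSet_Ioi hb
      _ = ENNReal.ofReal (∫ t in Ioi r⁻¹, Real.pi * (t ^ (-2:ℝ)) ∂volume) := by
          rw [ofReal_integral_eq_lintegral_ofReal]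
          · exact (integrableOn_Ioi_rpow_of_lt (by norm_num) (inv_pos.2 hr)).const_mul Real.pi
          · filter_upwards [ae_restrict_mem measurableSet_Ioi] with t ht
            have ht0 : 0 < t := lt_trans (inv_pos.2 hr) ht
            positivity
      _ = ENNReal.ofReal (Real.pi * r) := by
          congr 1
          rw [MeasureTheory.integral_const_mul, integral_Ioi_rpow_of_lt (by norm_num) (inv_pos.2 hr)]
          norm_num [Real.rpow_neg_one]
  calc _ ≤ ENNReal.ofReal (Real.pi * r) + ENNReal.ofReal (Real.pi * r) := add_le_add h1 h2
    _ = ENNReal.ofReal (2 * Real.pi * r) := by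
        rw [← ENNReal.ofReal_add (by positivity) (by positivity)]
        congr 1; ring

lemma lintegral_inv_dist_ball' (b w : ℂ) {r : ℝ} (hr : 0 < r) :
    ∫⁻ a in closedBall b r, ENNReal.ofReal (dist a b) * (ENNReal.ofReal (dist w a))⁻¹ ∂volume
      ≤ ENNReal.ofReal (3 * Real.pi * r ^ 2) := by
  have hinv : ∫⁻ a in closedBall b r, (ENNReal.ofReal (dist w a))⁻¹ ∂volume
      ≤ ENNReal.ofReal (3 * Real.pi * r) := by
    have hdecomp : closedBall b r
        = (closedBall b r ∩ closedBall w r) ∪ (closedBall b r \ closedBall w r) :=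
      (Set.inter_union_diff _ _).symm
    rw [hdecomp, lintegral_union (measurableSet_closedBall.diff measurableSet_closedBall)
      (disjoint_sdiff_self_right.mono_left Set.inter_subset_right)]
    have hp1 : ∫⁻ a in closedBall b r ∩ closedBall w r, (ENNReal.ofReal (dist w a))⁻¹ ∂volume
        ≤ ENNReal.ofReal (2 * Real.pi * r) :=
      le_trans (lintegral_mono_set Set.inter_subset_right) (lintegral_inv_dist_ball w hr)
    have hp2 : ∫⁻ a in closedBall b r \ closedBall w r, (ENNReal.ofReal (dist w a))⁻¹ ∂volume
        ≤ ENNReal.ofReal (Real.pi * r) := by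
      have hb : ∀ a ∈ closedBall b r \ closedBall w r,
          (ENNReal.ofReal (dist w a))⁻¹ ≤ (ENNReal.ofReal r)⁻¹ := by
        intro a ha
        have : r < dist w a := by
          have := ha.2
          rw [mem_closedBall, dist_comm] at this
          push_neg at this
          exact this
        exact ENNReal.inv_le_inv.2 (ENNReal.ofReal_le_ofReal this.le)
      calc ∫⁻ a in closedBall b r \ closedBall w r, (ENNReal.ofReal (dist w a))⁻¹ ∂volume
          ≤ ∫⁻ _a in closedBall b r \ closedBall w r, (ENNReal.ofReal r)⁻¹ ∂volume :=
            setLIntegral_mono' (measurableSet_closedBall.diff measurableSet_closedBall) hb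
        _ = (ENNReal.ofReal r)⁻¹ * volume (closedBall b r \ closedBall w r) := by
            rw [lintegral_const, Measure.restrict_apply MeasurableSet.univ, Set.univ_inter]
        _ ≤ (ENNReal.ofReal r)⁻¹ * ENNReal.ofReal (Real.pi * r ^ 2) := by
            gcongr
            rw [← volC b hr.le]
            exact measure_mono Set.diff_subset
        _ = ENNReal.ofReal (Real.pi * r) := by
            rw [show Real.pi * r ^ 2 = r * (Real.pi * r) by ring,
              ENNReal.ofReal_mul hr.le, ← mul_assoc, ENNReal.inv_mul_cancel
                (by simp [hr]) ENNReal.ofReal_ne_top, one_mul]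
    calc _ ≤ ENNReal.ofReal (2 * Real.pi * r) + ENNReal.ofReal (Real.pi * r) := add_le_add hp1 hp2
      _ = ENNReal.ofReal (3 * Real.pi * r) := by
          rw [← ENNReal.ofReal_add (by positivity) (by positivity)]
          congr 1; ring
  calc ∫⁻ a in closedBall b r, ENNReal.ofReal (dist a b) * (ENNReal.ofReal (dist w a))⁻¹ ∂volume
      ≤ ∫⁻ a in closedBall b r, ENNReal.ofReal r * (ENNReal.ofReal (dist w a))⁻¹ ∂volume := by
        refine setLIntegral_mono' measurableSet_closedBall fun a ha => ?_
        exact mul_le_mul_left (ENNReal.ofReal_le_ofReal (by rwa [mem_closedBall] at ha)) _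
    _ = ENNReal.ofReal r * ∫⁻ a in closedBall b r, (ENNReal.ofReal (dist w a))⁻¹ ∂volume :=
        lintegral_const_mul' _ _ ENNReal.ofReal_ne_top
    _ ≤ ENNReal.ofReal r * ENNReal.ofReal (3 * Real.pi * r) := mul_le_mul_right hinv _
    _ = ENNReal.ofReal (3 * Real.pi * r ^ 2) := by
        rw [← ENNReal.ofReal_mul hr.le]
        congr 1; ring

lemma univ_bound (b a : ℂ) (p : ℂ × ℂ) :
    ENNReal.ofReal (dist a b) * (ENNReal.ofReal (dist p.1 p.2) *
      ((ENNReal.ofReal (dist p.1 a))⁻¹ * (ENNReal.ofReal (dist p.2 a))⁻¹))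
    ≤ ENNReal.ofReal (dist a b) *
      ((ENNReal.ofReal (dist p.1 a))⁻¹ + (ENNReal.ofReal (dist p.2 a))⁻¹) := by
  refine mul_le_mul_right ?_ _
  set x := ENNReal.ofReal (dist p.1 a) with hx
  set y := ENNReal.ofReal (dist p.2 a) with hy
  have h12 : ENNReal.ofReal (dist p.1 p.2) ≤ x + y := by
    rw [hx, hy, ← ENNReal.ofReal_add dist_nonneg dist_nonneg]
    refine ENNReal.ofReal_le_ofReal ?_
    calc dist p.1 p.2 ≤ dist p.1 a + dist a p.2 := dist_triangle _ _ _
      _ = dist p.1 a + dist p.2 a := by rw [dist_comm a p.2]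
  calc ENNReal.ofReal (dist p.1 p.2) * (x⁻¹ * y⁻¹) ≤ (x + y) * (x⁻¹ * y⁻¹) :=
        mul_le_mul_left h12 _
    _ = (x * x⁻¹) * y⁻¹ + (y * y⁻¹) * x⁻¹ := by ring
    _ ≤ 1 * y⁻¹ + 1 * x⁻¹ := by
        refine add_le_add (mul_le_mul_left ?_ _) (mul_le_mul_left ?_ _) <;>
          rw [← div_eq_mul_inv] <;> exact ENNReal.div_self_le_one
    _ = x⁻¹ + y⁻¹ := by rw [one_mul, one_mul, add_comm]

lemma pair_integral (b : ℂ) {r : ℝ} (hr : 0 < r) (p : ℂ × ℂ) :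
    ∫⁻ a in closedBall b r, ENNReal.ofReal (dist a b) *
      ((ENNReal.ofReal (dist p.1 a))⁻¹ + (ENNReal.ofReal (dist p.2 a))⁻¹) ∂volume
      ≤ ENNReal.ofReal (6 * Real.pi * r ^ 2) := by
  have hmeas : Measurable fun a : ℂ =>
      ENNReal.ofReal (dist a b) * (ENNReal.ofReal (dist p.1 a))⁻¹ :=
    (measurable_id.dist measurable_const).ennreal_ofReal.mul
      ((measurable_const.dist measurable_id).ennreal_ofReal.inv)
  simp_rw [mul_add]
  rw [lintegral_add_left hmeas]
  calc _ ≤ ENNReal.ofReal (3 * Real.pi * r ^ 2) + ENNReal.ofReal (3 * Real.pi * r ^ 2) :=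
        add_le_add (lintegral_inv_dist_ball' b p.1 hr) (lintegral_inv_dist_ball' b p.2 hr)
    _ = ENNReal.ofReal (6 * Real.pi * r ^ 2) := by
        rw [← ENNReal.ofReal_add (by positivity) (by positivity)]
        congr 1; ring

lemma meas_kernel : Measurable (fun q : ℂ × (ℂ × ℂ) => ENNReal.ofReal (dist q.2.1 q.2.2) *
    ((ENNReal.ofReal (dist q.2.1 q.1))⁻¹ * (ENNReal.ofReal (dist q.2.2 q.1))⁻¹)) :=
  ((measurable_snd.fst.dist measurable_snd.snd).ennreal_ofReal).mul
    ((((measurable_snd.fst.dist measurable_fst).ennreal_ofReal).inv).mul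
      (((measurable_snd.snd.dist measurable_fst).ennreal_ofReal).inv))

lemma meas_kernel2 (b : ℂ) : Measurable (fun q : ℂ × (ℂ × ℂ) => ENNReal.ofReal (dist q.1 b) *
    ((ENNReal.ofReal (dist q.2.1 q.1))⁻¹ + (ENNReal.ofReal (dist q.2.2 q.1))⁻¹)) :=
  ((measurable_fst.dist measurable_const).ennreal_ofReal).mul
    ((((measurable_snd.fst.dist measurable_fst).ennreal_ofReal).inv).add
      (((measurable_snd.snd.dist measurable_fst).ennreal_ofReal).inv))

open MeasureTheory Metric Filter ENNReal Set Topology in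
theorem Htilde_refined_full_density' (X : Set ℂ) (hX : IsCompact X) (b : ℂ) (hb : b ∈ X)
    (σ : Measure (ℂ × ℂ)) [IsFiniteMeasure σ] (hsupp : σ ((X ×ˢ X)ᶜ) = 0)
    (hbb : σ {((b : ℂ), (b : ℂ))} = 0) :
    ∃ M : ℝ, 0 < M ∧
    Tendsto (fun r : ℝ => volume ({a : ℂ | ENNReal.ofReal (dist a b) *
        ∫⁻ p, ENNReal.ofReal (dist p.1 p.2) *
          ((ENNReal.ofReal (dist p.1 a))⁻¹ * (ENNReal.ofReal (dist p.2 a))⁻¹) ∂σ <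
        ENNReal.ofReal M} ∩ closedBall b r) / ENNReal.ofReal (Real.pi * r ^ 2))
      (nhdsWithin 0 (Set.Ioi 0)) (nhds 1) := by
  classical
  obtain ⟨D₀, hD₀⟩ := hX.isBounded.subset_closedBall b
  set D : ℝ := max D₀ 1 with hDdef
  have hD1 : (1:ℝ) ≤ D := le_max_right _ _
  have hD0 : (0:ℝ) < D := lt_of_lt_of_le one_pos hD1
  have hXD : X ⊆ closedBall b D := hD₀.trans (closedBall_subset_closedBall (le_max_left _ _))
  set T : ℝ := (σ Set.univ).toReal with hTdef
  have hT0 : 0 ≤ T := ENNReal.toReal_nonneg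
  have hσuniv : σ Set.univ = ENNReal.ofReal T :=
    (ENNReal.ofReal_toReal (measure_ne_top σ _)).symm
  set M : ℝ := 2 * T + 3 with hMdef
  refine ⟨M, by positivity, ?_⟩
  set k : ℂ → ℂ × ℂ → ℝ≥0∞ := fun a p => ENNReal.ofReal (dist p.1 p.2) *
      ((ENNReal.ofReal (dist p.1 a))⁻¹ * (ENNReal.ofReal (dist p.2 a))⁻¹) with hkdef
  set G : ℂ → ℝ≥0∞ := fun a => ENNReal.ofReal (dist a b) * ∫⁻ p, k a p ∂σ with hGdef
  have hGmeas : Measurable G :=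
    ((measurable_id.dist measurable_const).ennreal_ofReal).mul
      (Measurable.lintegral_prod_right meas_kernel)
  have hEmeas : MeasurableSet {a : ℂ | G a < ENNReal.ofReal M} :=
    measurableSet_lt hGmeas measurable_const
  have hXXmeas : MeasurableSet (X ×ˢ X) :=
    (hX.isClosed.measurableSet).prod (hX.isClosed.measurableSet)
  rw [ENNReal.tendsto_nhds one_ne_top]
  intro ε hε
  set ε' : ℝ≥0∞ := min ε 1 with hε'def
  have hε'0 : 0 < ε' := lt_min hε one_pos
  have hε'1 : ε' ≤ 1 := min_le_right _ _
  have hε'ε : ε' ≤ ε := min_le_left _ _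
  -- the family of small sets
  set Qs : ℕ → Set (ℂ × ℂ) := fun n => {p : ℂ × ℂ |
      (dist p.1 b ≤ 1/((n:ℝ)+1) ∧ dist p.2 b ≤ 1/((n:ℝ)+1)) ∨
      (p.1 ≠ b ∧ p.2 ≠ b ∧ (dist p.1 b ≤ 1/((n:ℝ)+1) ∨ dist p.2 b ≤ 1/((n:ℝ)+1)))} with hQsdef
  have hQmeas : ∀ n, MeasurableSet (Qs n) := by
    intro n
    have h1 : ∀ c : ℝ, MeasurableSet {p : ℂ × ℂ | dist p.1 b ≤ c} := fun c =>
      measurableSet_le (measurable_fst.dist measurable_const) measurable_const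
    have h2 : ∀ c : ℝ, MeasurableSet {p : ℂ × ℂ | dist p.2 b ≤ c} := fun c =>
      measurableSet_le (measurable_snd.dist measurable_const) measurable_const
    have h3 : MeasurableSet {p : ℂ × ℂ | p.1 = b} :=
      (measurableSet_singleton b).preimage measurable_fst
    have h4 : MeasurableSet {p : ℂ × ℂ | p.2 = b} :=
      (measurableSet_singleton b).preimage measurable_snd
    exact ((h1 _).inter (h2 _)).union ((h3.compl.inter (h4.compl.inter ((h1 _).union (h2 _)))))
  have hQanti : Antitone Qs := by
    intro m n hmn p hp
    have hle : 1/((n:ℝ)+1) ≤ 1/((m:ℝ)+1) := by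
      apply one_div_le_one_div_of_le (by positivity)
      exact_mod_cast add_le_add_left (Nat.cast_le.2 hmn) 1
    rcases hp with ⟨ha, hb2⟩ | ⟨ha, hb2, hc⟩
    · exact Or.inl ⟨ha.trans hle, hb2.trans hle⟩
    · exact Or.inr ⟨ha, hb2, hc.imp (fun h => h.trans hle) (fun h => h.trans hle)⟩
  have hQinter : (⋂ n, Qs n) ⊆ {((b : ℂ), (b : ℂ))} := by
    intro p hp
    rw [Set.mem_iInter] at hp
    have key : ∀ x : ℝ, (∀ n : ℕ, x ≤ 1/((n:ℝ)+1)) → x ≤ 0 := by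
      intro x hx
      exact ge_of_tendsto' tendsto_one_div_add_atTop_nhds_zero_nat hx
    have hdist : ∀ x : ℂ, dist x b ≤ 0 → x = b := fun x hx =>
      dist_le_zero.1 hx
    by_cases h1 : p.1 = b
    · have h2 : p.2 = b := by
        refine hdist _ (key _ fun n => ?_)
        rcases hp n with ⟨_, h⟩ | ⟨hne, _, _⟩
        · exact h
        · exact absurd h1 hne
      have : p = (b, b) := Prod.ext h1 h2
      simp [this]
    · by_cases h2 : p.2 = b
      · exfalso
        refine h1 (hdist _ (key _ fun n => ?_))
        rcases hp n with ⟨h, _⟩ | ⟨_, hne, _⟩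
        · exact h
        · exact absurd h2 hne
      · exfalso
        have hmin : ∀ n : ℕ, min (dist p.1 b) (dist p.2 b) ≤ 1/((n:ℝ)+1) := by
          intro n
          rcases hp n with ⟨h, _⟩ | ⟨_, _, h | h⟩
          · exact le_trans (min_le_left _ _) h
          · exact le_trans (min_le_left _ _) h
          · exact le_trans (min_le_right _ _) h
        rcases min_le_iff.1 (key _ hmin) with h | h
        · exact h1 (hdist _ h)
        · exact h2 (hdist _ h)
  have hQzero : σ (⋂ n, Qs n) = 0 :=
    le_antisymm (le_trans (measure_mono hQinter) hbb.le) zero_le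
  have htend : Tendsto (σ ∘ Qs) atTop (𝓝 0) := by
    rw [← hQzero]
    exact tendsto_measure_iInter_atTop (fun n => (hQmeas n).nullMeasurableSet) hQanti
      ⟨0, measure_ne_top σ _⟩
  have hε'6 : (0 : ℝ≥0∞) < ε' / 6 := ENNReal.div_pos hε'0.ne' (by norm_num)
  obtain ⟨n, hn⟩ := (htend.eventually_lt_const hε'6).exists
  set ρ : ℝ := 1/((n:ℝ)+1) with hρdef
  have hρ0 : 0 < ρ := by positivity
  set Q : Set (ℂ × ℂ) := Qs n with hQdef
  have hQm : MeasurableSet Q := hQmeas n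
  set P2 : Set (ℂ × ℂ) := {p : ℂ × ℂ | (p.1 = b ∨ p.2 = b) ∧
      ¬(dist p.1 b ≤ ρ ∧ dist p.2 b ≤ ρ)} with hP2def
  set P3 : Set (ℂ × ℂ) := {p : ℂ × ℂ | ρ < dist p.1 b ∧ ρ < dist p.2 b} ∩ (X ×ˢ X) with hP3def
  have hP2m : MeasurableSet P2 := by
    have h3 : MeasurableSet {p : ℂ × ℂ | p.1 = b} :=
      (measurableSet_singleton b).preimage measurable_fst
    have h4 : MeasurableSet {p : ℂ × ℂ | p.2 = b} :=
      (measurableSet_singleton b).preimage measurable_snd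
    have h1 : MeasurableSet {p : ℂ × ℂ | dist p.1 b ≤ ρ} :=
      measurableSet_le (measurable_fst.dist measurable_const) measurable_const
    have h2 : MeasurableSet {p : ℂ × ℂ | dist p.2 b ≤ ρ} :=
      measurableSet_le (measurable_snd.dist measurable_const) measurable_const
    exact (h3.union h4).inter (h1.inter h2).compl
  have hP3m : MeasurableSet P3 := by
    refine MeasurableSet.inter ?_ hXXmeas
    exact (measurableSet_lt measurable_const (measurable_fst.dist measurable_const)).inter
      (measurableSet_lt measurable_const (measurable_snd.dist measurable_const))
  have hcover : (X ×ˢ X) ⊆ Q ∪ (P2 ∪ P3) := by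
    intro p hp
    by_cases hq : p ∈ Q
    · exact Or.inl hq
    · refine Or.inr ?_
      by_cases hN : p.1 = b ∨ p.2 = b
      · refine Or.inl ⟨hN, fun hc => hq (Or.inl hc)⟩
      · push_neg at hN
        refine Or.inr ⟨⟨?_, ?_⟩, hp⟩
        · by_contra hc; push_neg at hc
          exact hq (Or.inr ⟨hN.1, hN.2, Or.inl hc⟩)
        · by_contra hc; push_neg at hc
          exact hq (Or.inr ⟨hN.1, hN.2, Or.inr hc⟩)
  -- eventual smallness of r
  set r0 : ℝ := min (ρ/2) (ρ^2/(8*D*(T+1))) with hr0def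
  have hr0pos : 0 < r0 := lt_min (by positivity) (by positivity)
  filter_upwards [Ioc_mem_nhdsGT_of_mem (Set.mem_Ico.2 ⟨le_refl (0:ℝ), hr0pos⟩)] with r hr
  obtain ⟨hrpos, hrle⟩ := hr
  have hrρ : r ≤ ρ/2 := hrle.trans (min_le_left _ _)
  have hrκ : r ≤ ρ^2/(8*D*(T+1)) := hrle.trans (min_le_right _ _)
  set c : ℝ≥0∞ := ENNReal.ofReal (Real.pi * r ^ 2) with hcdef
  have hc0 : c ≠ 0 := by
    simp only [hcdef, ne_eq, ENNReal.ofReal_eq_zero, not_le]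
    positivity
  have hct : c ≠ ∞ := ENNReal.ofReal_ne_top
  have hvolc : volume (closedBall b r) = c := volC b hrpos.le
  -- the three partial potentials
  set g1 : ℂ → ℝ≥0∞ := fun a => ENNReal.ofReal (dist a b) * ∫⁻ p in Q, k a p ∂σ with hg1def
  have hg1meas : Measurable g1 :=
    ((measurable_id.dist measurable_const).ennreal_ofReal).mul
      (Measurable.lintegral_prod_right meas_kernel)
  -- bound for P2 part
  have hG2 : ∀ a ∈ closedBall b r, ENNReal.ofReal (dist a b) * ∫⁻ p in P2, k a p ∂σ
      ≤ ENNReal.ofReal (2 * T) := by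
    intro a ha
    rw [mem_closedBall] at ha
    rw [← lintegral_const_mul' _ _ ENNReal.ofReal_ne_top]
    have hbound : ∀ p ∈ P2, ENNReal.ofReal (dist a b) * k a p ≤ 2 := by
      intro p hp
      obtain ⟨hor, hnot⟩ := hp
      have haρ : dist a b ≤ ρ/2 := ha.trans hrρ
      rcases hor with h1 | h1
      · have hd2 : ρ < dist p.2 b := by
          by_contra hc; push_neg at hc
          exact hnot ⟨by simp [h1, hρ0.le], hc⟩
        have htri := dist_triangle p.2 a b
        have hfar : ρ/2 ≤ dist p.2 a := by linarith
        have h2d : dist b p.2 ≤ 2 * dist p.2 a := by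
          have h' := dist_triangle b a p.2
          have e1 : dist b a = dist a b := dist_comm b a
          have e2 : dist a p.2 = dist p.2 a := dist_comm a p.2
          linarith
        calc ENNReal.ofReal (dist a b) * k a p
            = (ENNReal.ofReal (dist a b) * (ENNReal.ofReal (dist p.1 a))⁻¹) *
              (ENNReal.ofReal (dist p.1 p.2) * (ENNReal.ofReal (dist p.2 a))⁻¹) := by
              simp only [hkdef]; ring
          _ ≤ ENNReal.ofReal 1 * ENNReal.ofReal 2 := by
              refine mul_le_mul' ?_ ?_
              · refine ofReal_mul_inv_le zero_le_one ?_
                rw [h1, one_mul, dist_comm a b]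
              · refine ofReal_mul_inv_le (by norm_num) ?_
                rw [h1]; exact h2d
          _ ≤ 2 := by
              rw [ENNReal.ofReal_one, one_mul, ENNReal.ofReal_ofNat]
      · have hd2 : ρ < dist p.1 b := by
          by_contra hc; push_neg at hc
          exact hnot ⟨hc, by simp [h1, hρ0.le]⟩
        have htri := dist_triangle p.1 a b
        have hfar : ρ/2 ≤ dist p.1 a := by linarith
        have h2d : dist p.1 b ≤ 2 * dist p.1 a := by
          have h' := dist_triangle p.1 a b
          linarith
        calc ENNReal.ofReal (dist a b) * k a p
            = (ENNReal.ofReal (dist a b) * (ENNReal.ofReal (dist p.2 a))⁻¹) *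
              (ENNReal.ofReal (dist p.1 p.2) * (ENNReal.ofReal (dist p.1 a))⁻¹) := by
              simp only [hkdef]; ring
          _ ≤ ENNReal.ofReal 1 * ENNReal.ofReal 2 := by
              refine mul_le_mul' ?_ ?_
              · refine ofReal_mul_inv_le zero_le_one ?_
                rw [h1, one_mul, dist_comm a b]
              · refine ofReal_mul_inv_le (by norm_num) ?_
                rw [h1]; exact h2d
          _ ≤ 2 := by
              rw [ENNReal.ofReal_one, one_mul, ENNReal.ofReal_ofNat]
    calc ∫⁻ p in P2, ENNReal.ofReal (dist a b) * k a p ∂σ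
        ≤ ∫⁻ _p in P2, 2 ∂σ := setLIntegral_mono' hP2m hbound
      _ = 2 * σ P2 := by
          rw [lintegral_const, Measure.restrict_apply MeasurableSet.univ, Set.univ_inter]
      _ ≤ 2 * σ Set.univ := mul_le_mul_right (measure_mono (Set.subset_univ _)) _
      _ = ENNReal.ofReal (2 * T) := by
          rw [hσuniv, ENNReal.ofReal_mul (by norm_num : (0:ℝ) ≤ 2), ENNReal.ofReal_ofNat]
  -- bound for P3 part
  have hG3 : ∀ a ∈ closedBall b r, ENNReal.ofReal (dist a b) * ∫⁻ p in P3, k a p ∂σ < 1 := by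
    intro a ha
    rw [mem_closedBall] at ha
    rw [← lintegral_const_mul' _ _ ENNReal.ofReal_ne_top]
    set κ : ℝ := r * (2*D * (2/ρ * (2/ρ))) with hκdef
    have hκ0 : 0 ≤ κ := by positivity
    have hbound : ∀ p ∈ P3, ENNReal.ofReal (dist a b) * k a p ≤ ENNReal.ofReal κ := by
      intro p hp
      obtain ⟨⟨hp1, hp2⟩, hpX⟩ := hp
      rw [Set.mem_prod] at hpX
      have haρ : dist a b ≤ ρ/2 := ha.trans hrρ
      have ht1 := dist_triangle p.1 a b
      have ht2 := dist_triangle p.2 a b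
      have hfar1 : ρ/2 ≤ dist p.1 a := by linarith
      have hfar2 : ρ/2 ≤ dist p.2 a := by linarith
      have h12 : dist p.1 p.2 ≤ 2*D := by
        have h1 := mem_closedBall.1 (hXD hpX.1)
        have h2 := mem_closedBall.1 (hXD hpX.2)
        have h3 := dist_triangle p.1 b p.2
        have e : dist b p.2 = dist p.2 b := dist_comm _ _
        linarith
      have hinv : ∀ x : ℝ, ρ/2 ≤ x → (ENNReal.ofReal x)⁻¹ ≤ ENNReal.ofReal (2/ρ) := by
        intro x hx
        rw [show (2:ℝ)/ρ = (ρ/2)⁻¹ by rw [inv_div],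
          ENNReal.ofReal_inv_of_pos (by positivity)]
        exact ENNReal.inv_le_inv.2 (ENNReal.ofReal_le_ofReal hx)
      calc ENNReal.ofReal (dist a b) * k a p
          ≤ ENNReal.ofReal r * (ENNReal.ofReal (2*D) *
              (ENNReal.ofReal (2/ρ) * ENNReal.ofReal (2/ρ))) := by
            simp only [hkdef]
            exact mul_le_mul' (ENNReal.ofReal_le_ofReal ha)
              (mul_le_mul' (ENNReal.ofReal_le_ofReal h12)
                (mul_le_mul' (hinv _ hfar1) (hinv _ hfar2)))
        _ = ENNReal.ofReal κ := by
            rw [hκdef, ENNReal.ofReal_mul hrpos.le,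
              ENNReal.ofReal_mul (by positivity : (0:ℝ) ≤ 2*D),
              ENNReal.ofReal_mul (by positivity : (0:ℝ) ≤ 2/ρ)]
    have hκT : κ * T < 1 := by
      have hκval : κ = 8*D*r/ρ^2 := by rw [hκdef]; field_simp; ring
      rw [hκval, div_mul_eq_mul_div, div_lt_one (by positivity)]
      have key : r * (8*D*(T+1)) ≤ ρ^2 := (le_div_iff₀ (by positivity)).1 hrκ
      nlinarith [mul_pos (mul_pos (by norm_num : (0:ℝ) < 8) hD0) hrpos]
    calc ∫⁻ p in P3, ENNReal.ofReal (dist a b) * k a p ∂σ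
        ≤ ∫⁻ _p in P3, ENNReal.ofReal κ ∂σ := setLIntegral_mono' hP3m hbound
      _ = ENNReal.ofReal κ * σ P3 := by
          rw [lintegral_const, Measure.restrict_apply MeasurableSet.univ, Set.univ_inter]
      _ ≤ ENNReal.ofReal κ * ENNReal.ofReal T := by
          rw [← hσuniv]
          exact mul_le_mul_right (measure_mono (Set.subset_univ _)) _
      _ = ENNReal.ofReal (κ * T) := (ENNReal.ofReal_mul hκ0).symm
      _ < 1 := ENNReal.ofReal_lt_one.2 hκT
  -- Markov bound for the Q part
  have hmark : volume ({a : ℂ | 1 ≤ g1 a} ∩ closedBall b r) ≤ ENNReal.ofReal (6 * Real.pi * r^2) * σ Q := by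
    have h1 := mul_meas_ge_le_lintegral₀ (μ := volume.restrict (closedBall b r))
      hg1meas.aemeasurable 1
    rw [one_mul, Measure.restrict_apply (measurableSet_le measurable_const hg1meas)] at h1
    refine h1.trans ?_
    have hrw : ∀ a : ℂ, g1 a = ∫⁻ p in Q, ENNReal.ofReal (dist a b) * k a p ∂σ := fun a =>
      (lintegral_const_mul' _ _ ENNReal.ofReal_ne_top).symm
    calc ∫⁻ a in closedBall b r, g1 a ∂volume
        = ∫⁻ a in closedBall b r, ∫⁻ p in Q, ENNReal.ofReal (dist a b) * k a p ∂σ ∂volume :=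
          lintegral_congr hrw
      _ ≤ ∫⁻ a in closedBall b r, ∫⁻ p in Q, ENNReal.ofReal (dist a b) *
          ((ENNReal.ofReal (dist p.1 a))⁻¹ + (ENNReal.ofReal (dist p.2 a))⁻¹) ∂σ ∂volume := by
          refine lintegral_mono fun a => lintegral_mono fun p => ?_
          simp only [hkdef]
          exact univ_bound b a p
      _ = ∫⁻ p in Q, ∫⁻ a in closedBall b r, ENNReal.ofReal (dist a b) *
          ((ENNReal.ofReal (dist p.1 a))⁻¹ + (ENNReal.ofReal (dist p.2 a))⁻¹) ∂volume ∂σ :=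
          lintegral_lintegral_swap ((meas_kernel2 b).aemeasurable)
      _ ≤ ∫⁻ _p in Q, ENNReal.ofReal (6*Real.pi*r^2) ∂σ :=
          lintegral_mono fun p => pair_integral b hrpos p
      _ = ENNReal.ofReal (6*Real.pi*r^2) * σ Q := by
          rw [lintegral_const, Measure.restrict_apply MeasurableSet.univ, Set.univ_inter]
  -- the bad set is contained in the Markov set
  have hbadsub : {a : ℂ | ENNReal.ofReal M ≤ G a} ∩ closedBall b r
      ⊆ {a : ℂ | 1 ≤ g1 a} ∩ closedBall b r := by
    rintro a ⟨hMa, ha⟩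
    refine ⟨?_, ha⟩
    by_contra hlt
    simp only [Set.mem_setOf_eq, not_le] at hlt
    have hle1 : (∫⁻ p, k a p ∂σ) ≤ ∫⁻ p in Q, k a p ∂σ +
        (∫⁻ p in P2, k a p ∂σ + ∫⁻ p in P3, k a p ∂σ) := by
      calc (∫⁻ p, k a p ∂σ)
          = ∫⁻ p in X ×ˢ X, k a p ∂σ + ∫⁻ p in (X ×ˢ X)ᶜ, k a p ∂σ :=
            (lintegral_add_compl _ hXXmeas).symm
        _ = ∫⁻ p in X ×ˢ X, k a p ∂σ := by
            rw [setLIntegral_measure_zero _ _ hsupp, add_zero]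
        _ ≤ ∫⁻ p in Q ∪ (P2 ∪ P3), k a p ∂σ := lintegral_mono_set hcover
        _ ≤ ∫⁻ p in Q, k a p ∂σ + ∫⁻ p in P2 ∪ P3, k a p ∂σ := lintegral_union_le _ _ _
        _ ≤ ∫⁻ p in Q, k a p ∂σ + (∫⁻ p in P2, k a p ∂σ + ∫⁻ p in P3, k a p ∂σ) :=
            add_le_add_right (lintegral_union_le _ _ _) _
    have hGle : G a ≤ g1 a + (ENNReal.ofReal (dist a b) * ∫⁻ p in P2, k a p ∂σ +
        ENNReal.ofReal (dist a b) * ∫⁻ p in P3, k a p ∂σ) := by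
      simp only [hGdef, hg1def]
      calc ENNReal.ofReal (dist a b) * ∫⁻ p, k a p ∂σ
          ≤ ENNReal.ofReal (dist a b) * (∫⁻ p in Q, k a p ∂σ +
            (∫⁻ p in P2, k a p ∂σ + ∫⁻ p in P3, k a p ∂σ)) := mul_le_mul_right hle1 _
        _ = _ := by ring
    have htot : ENNReal.ofReal M ≤ 1 + (ENNReal.ofReal (2*T) + 1) :=
      le_trans hMa (hGle.trans (add_le_add hlt.le (add_le_add (hG2 a ha) (hG3 a ha).le)))
    have hrw2 : (1 : ℝ≥0∞) + (ENNReal.ofReal (2*T) + 1) = ENNReal.ofReal (2*T+2) := by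
      rw [← ENNReal.ofReal_one, ← ENNReal.ofReal_add (by positivity) (by norm_num),
        ← ENNReal.ofReal_add (by norm_num) (by positivity)]
      congr 1
      ring
    rw [hrw2] at htot
    have := (ENNReal.ofReal_le_ofReal_iff (by positivity)).1 htot
    rw [hMdef] at this
    linarith
  -- conclusion
  have hEgoal : {a : ℂ | ENNReal.ofReal (dist a b) * ∫⁻ p, k a p ∂σ < ENNReal.ofReal M}
      = {a : ℂ | G a < ENNReal.ofReal M} := rfl
  have hvol_le : volume ({a : ℂ | G a < ENNReal.ofReal M} ∩ closedBall b r) ≤ c :=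
    hvolc ▸ measure_mono Set.inter_subset_right
  have hbadvol : volume ({a : ℂ | ENNReal.ofReal M ≤ G a} ∩ closedBall b r) ≤ c * ε' := by
    refine le_trans (measure_mono hbadsub) (le_trans hmark ?_)
    have h6 : ENNReal.ofReal (6 * Real.pi * r^2) = 6 * c := by
      rw [hcdef, ← ENNReal.ofReal_ofNat 6, ← ENNReal.ofReal_mul (by norm_num : (0:ℝ) ≤ 6)]
      congr 1
      ring
    rw [h6]
    calc 6 * c * σ Q ≤ 6 * c * (ε'/6) := mul_le_mul_right hn.le _
      _ = c * ε' := by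
          rw [mul_comm (6:ℝ≥0∞) c, mul_assoc,
            ENNReal.mul_div_cancel' (by norm_num) (by norm_num)]
  have hcov2 : c ≤ volume ({a : ℂ | G a < ENNReal.ofReal M} ∩ closedBall b r) +
      volume ({a : ℂ | ENNReal.ofReal M ≤ G a} ∩ closedBall b r) := by
    rw [← hvolc]
    refine le_trans (measure_mono ?_) (measure_union_le _ _)
    intro a ha2
    rcases lt_or_ge (G a) (ENNReal.ofReal M) with h | h
    · exact Or.inl ⟨h, ha2⟩
    · exact Or.inr ⟨h, ha2⟩
  have hε'top : ε' * c ≠ ∞ := ENNReal.mul_ne_top (hε'1.trans_lt ENNReal.one_lt_top).ne hct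
  have hlow : (1 - ε') * c ≤ volume ({a : ℂ | G a < ENNReal.ofReal M} ∩ closedBall b r) := by
    rw [← ENNReal.add_le_add_iff_right hε'top]
    calc (1-ε')*c + ε'*c = ((1-ε') + ε')*c := (add_mul _ _ _).symm
      _ = 1 * c := by rw [tsub_add_cancel_of_le hε'1]
      _ = c := one_mul c
      _ ≤ volume ({a : ℂ | G a < ENNReal.ofReal M} ∩ closedBall b r) +
          volume ({a : ℂ | ENNReal.ofReal M ≤ G a} ∩ closedBall b r) := hcov2
      _ ≤ volume ({a : ℂ | G a < ENNReal.ofReal M} ∩ closedBall b r) + c * ε' :=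
          add_le_add_right hbadvol _
      _ = volume ({a : ℂ | G a < ENNReal.ofReal M} ∩ closedBall b r) + ε' * c := by
          rw [mul_comm]
  rw [hEgoal, Set.mem_Icc]
  constructor
  · have h1 : 1 - ε ≤ 1 - ε' := tsub_le_tsub_left hε'ε 1
    refine h1.trans ?_
    have h2 := ENNReal.div_le_div_right hlow c
    refine le_trans (le_of_eq ?_) h2
    rw [div_eq_mul_inv, mul_assoc, ENNReal.mul_inv_cancel hc0 hct, mul_one]
  · have h3 := ENNReal.div_le_div_right hvol_le c
    rw [ENNReal.div_self hc0 hct] at h3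
    exact h3.trans le_self_add

/-- if σ = |μ| is a finite measure on X × X with no mass at (b,b),
then there exists M > 0 such that the set
{a : |a-b| ∫∫ |z-w|/(|z-a||w-a|) d|μ|(z,w) < M} has full area density at b. -/
theorem Htilde_refined_full_density (α : ℝ) (hα0 : 0 < α) (hα1 : α < 1)
    (X : Set ℂ) (hX : IsCompact X) (b : ℂ) (hb : b ∈ X)
    (σ : Measure (ℂ × ℂ)) [IsFiniteMeasure σ] (hsupp : σ ((X ×ˢ X)ᶜ) = 0)
    (hbb : σ {((b : ℂ), (b : ℂ))} = 0) :
    ∃ M : ℝ, 0 < M ∧ FullAreaDensityAt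
      {a : ℂ | ENNReal.ofReal (dist a b) *
        ∫⁻ p, ENNReal.ofReal (dist p.1 p.2) *
          ((ENNReal.ofReal (dist p.1 a))⁻¹ * (ENNReal.ofReal (dist p.2 a))⁻¹) ∂σ <
        ENNReal.ofReal M} b := by
  obtain ⟨M, hM0, hM⟩ := Htilde_refined_full_density' X hX b hb σ hsupp hbb
  exact ⟨M, hM0, hM⟩
end

section
/- Let 0 < α < 1, U ⊆ ℂ a bounded open set with boundary X, and b ∈ X. Suppose there exist points a_n ∈ U with a_n → b such that for every f in the algebra A = A_α(U), the difference quotients (f(a_n) - f(b))/(a_n - b) form a bounded sequence. Then A admits a nonzero bounded (continuous) point derivation at b. -/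
open MeasureTheory Metric Filter ENNReal

/-- Membership in the algebra `A_α(U)`: holomorphic on `U`, continuous on the
closure, and little-Lipschitz-α on the closure of `U`. -/
def MemA (α : ℝ) (U : Set ℂ) (f : ℂ → ℂ) : Prop :=
  DifferentiableOn ℂ f U ∧ ContinuousOn f (closure U) ∧
  (∃ C, ∀ z ∈ closure U, ∀ w ∈ closure U, ‖f z - f w‖ ≤ C * ‖z - w‖ ^ α) ∧
  (∀ ε > 0, ∃ δ > 0, ∀ z ∈ closure U, ∀ w ∈ closure U,
    ‖z - w‖ < δ → ‖f z - f w‖ ≤ ε * ‖z - w‖ ^ α)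

/-- The norm on `A_α(U)`: sup norm over the closure of `U` plus α-Hölder seminorm. -/
noncomputable def aNorm (α : ℝ) (U : Set ℂ) (f : ℂ → ℂ) : ℝ :=
  sSup ((fun z => ‖f z‖) '' closure U) +
  sSup {c | ∃ z ∈ closure U, ∃ w ∈ closure U, z ≠ w ∧ c = ‖f z - f w‖ / ‖z - w‖ ^ α}

noncomputable def supP (U : Set ℂ) (f : ℂ → ℂ) : ℝ :=
  sSup ((fun z => ‖f z‖) '' closure U)

noncomputable def holP (α : ℝ) (U : Set ℂ) (f : ℂ → ℂ) : ℝ :=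
  sSup {c | ∃ z ∈ closure U, ∃ w ∈ closure U, z ≠ w ∧ c = ‖f z - f w‖ / ‖z - w‖ ^ α}

lemma aNorm_eq (α : ℝ) (U : Set ℂ) (f : ℂ → ℂ) : aNorm α U f = supP U f + holP α U f := rfl

lemma supP_nonneg (U : Set ℂ) (f : ℂ → ℂ) : 0 ≤ supP U f :=
  Real.sSup_nonneg (by rintro x ⟨z, -, rfl⟩; exact norm_nonneg _)

lemma holP_nonneg (α : ℝ) (U : Set ℂ) (f : ℂ → ℂ) : 0 ≤ holP α U f := by
  refine Real.sSup_nonneg ?_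
  rintro x ⟨z, hz, w, hw, hzw, rfl⟩
  positivity

lemma aNorm_nonneg (α : ℝ) (U : Set ℂ) (f : ℂ → ℂ) : 0 ≤ aNorm α U f :=
  add_nonneg (supP_nonneg U f) (holP_nonneg α U f)

section Basic

variable {α : ℝ} {U : Set ℂ} (hα0 : 0 < α) (hα1 : α < 1) (hUb : Bornology.IsBounded U)
  {f : ℂ → ℂ}

lemma norm_le_supP (hUb : Bornology.IsBounded U) (hf : ContinuousOn f (closure U))
    {z : ℂ} (hz : z ∈ closure U) : ‖f z‖ ≤ supP U f := by
  refine le_csSup ?_ ⟨z, hz, rfl⟩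
  exact (hUb.isCompact_closure).bddAbove_image (continuous_norm.comp_continuousOn hf)

lemma quot_le_holP (hf : MemA α U f) {z w : ℂ} (hz : z ∈ closure U) (hw : w ∈ closure U)
    (hzw : z ≠ w) : ‖f z - f w‖ / ‖z - w‖ ^ α ≤ holP α U f := by
  obtain ⟨C, hC⟩ := hf.2.2.1
  refine le_csSup ⟨C, ?_⟩ ⟨z, hz, w, hw, hzw, rfl⟩
  rintro x ⟨z', hz', w', hw', hzw', rfl⟩
  rw [div_le_iff₀ (by
    have : z' - w' ≠ 0 := sub_ne_zero.2 hzw'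
    have : (0:ℝ) < ‖z' - w'‖ := by simpa [norm_pos_iff] using this
    exact Real.rpow_pos_of_pos this α)]
  exact hC z' hz' w' hw'

lemma holder_bound (hα0 : 0 < α) (hf : MemA α U f) {z w : ℂ} (hz : z ∈ closure U)
    (hw : w ∈ closure U) : ‖f z - f w‖ ≤ holP α U f * ‖z - w‖ ^ α := by
  rcases eq_or_ne z w with rfl | hzw
  · simp [Real.zero_rpow hα0.ne']
  · have hpos : (0:ℝ) < ‖z - w‖ ^ α :=
      Real.rpow_pos_of_pos (by simpa [norm_pos_iff] using sub_ne_zero.2 hzw) α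
    have := quot_le_holP hf hz hw hzw
    calc ‖f z - f w‖ = ‖f z - f w‖ / ‖z - w‖ ^ α * ‖z - w‖ ^ α := by
          rw [div_mul_cancel₀ _ hpos.ne']
      _ ≤ holP α U f * ‖z - w‖ ^ α := by
          exact mul_le_mul_of_nonneg_right this hpos.le

lemma holder_bound' (hα0 : 0 < α) (hf : MemA α U f) {z w : ℂ} (hz : z ∈ closure U)
    (hw : w ∈ closure U) : ‖f z - f w‖ ≤ aNorm α U f * ‖z - w‖ ^ α := by
  refine (holder_bound hα0 hf hz hw).trans ?_
  have h1 : holP α U f ≤ aNorm α U f := by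
    rw [aNorm_eq]; linarith [supP_nonneg U f]
  exact mul_le_mul_of_nonneg_right h1 (Real.rpow_nonneg (norm_nonneg _) α)

lemma norm_le_aNorm (hUb : Bornology.IsBounded U) (hf : MemA α U f) {z : ℂ}
    (hz : z ∈ closure U) : ‖f z‖ ≤ aNorm α U f := by
  refine (norm_le_supP hUb hf.2.1 hz).trans ?_
  rw [aNorm_eq]; linarith [holP_nonneg α U f]

lemma aNorm_le_of_bounds (hUne : (closure U).Nonempty) {B1 B2 : ℝ} (hB2 : 0 ≤ B2)
    (h1 : ∀ z ∈ closure U, ‖f z‖ ≤ B1)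
    (h2 : ∀ z ∈ closure U, ∀ w ∈ closure U, ‖f z - f w‖ ≤ B2 * ‖z - w‖ ^ α) :
    aNorm α U f ≤ B1 + B2 := by
  rw [aNorm_eq]
  have hB1 : 0 ≤ B1 := (norm_nonneg _).trans (h1 _ hUne.choose_spec)
  refine add_le_add (Real.sSup_le ?_ hB1) (Real.sSup_le ?_ hB2)
  · rintro x ⟨z, hz, rfl⟩; exact h1 z hz
  · rintro x ⟨z, hz, w, hw, hzw, rfl⟩
    rw [div_le_iff₀ (Real.rpow_pos_of_pos (by simpa [norm_pos_iff] using sub_ne_zero.2 hzw) α)]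
    exact h2 z hz w hw

end Basic

section Mem

variable {α : ℝ} {U : Set ℂ} {f g : ℂ → ℂ}

lemma memA_congr (hf : MemA α U f) (h : ∀ z ∈ closure U, g z = f z) : MemA α U g := by
  obtain ⟨hd, hc, ⟨C, hC⟩, hl⟩ := hf
  have hU : ∀ z ∈ U, g z = f z := fun z hz => h z (subset_closure hz)
  refine ⟨hd.congr hU, hc.congr h, ⟨C, ?_⟩, ?_⟩
  · intro z hz w hw; rw [h z hz, h w hw]; exact hC z hz w hw
  · intro ε hε
    obtain ⟨δ, hδ, hδ'⟩ := hl ε hε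
    exact ⟨δ, hδ, fun z hz w hw hd => by rw [h z hz, h w hw]; exact hδ' z hz w hw hd⟩

lemma memA_add (hf : MemA α U f) (hg : MemA α U g) : MemA α U (f + g) := by
  obtain ⟨hd, hc, ⟨C, hC⟩, hl⟩ := hf
  obtain ⟨hd', hc', ⟨C', hC'⟩, hl'⟩ := hg
  refine ⟨hd.add hd', hc.add hc', ⟨C + C', ?_⟩, ?_⟩
  · intro z hz w hw
    have : f z + g z - (f w + g w) = (f z - f w) + (g z - g w) := by ring
    simp only [Pi.add_apply, this, add_mul]
    exact (norm_add_le _ _).trans (add_le_add (hC z hz w hw) (hC' z hz w hw))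
  · intro ε hε
    obtain ⟨δ, hδ, h1⟩ := hl (ε/2) (by linarith)
    obtain ⟨δ', hδ', h2⟩ := hl' (ε/2) (by linarith)
    refine ⟨min δ δ', lt_min hδ hδ', fun z hz w hw hd => ?_⟩
    have e : f z + g z - (f w + g w) = (f z - f w) + (g z - g w) := by ring
    simp only [Pi.add_apply, e]
    have := add_le_add (h1 z hz w hw (hd.trans_le (min_le_left _ _)))
      (h2 z hz w hw (hd.trans_le (min_le_right _ _)))
    refine (norm_add_le _ _).trans (this.trans (le_of_eq (by ring)))

lemma memA_smul (c : ℂ) (hf : MemA α U f) : MemA α U (c • f) := by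
  obtain ⟨hd, hc, ⟨C, hC⟩, hl⟩ := hf
  refine ⟨hd.const_smul c, hc.const_smul c, ⟨‖c‖ * C, ?_⟩, ?_⟩
  · intro z hz w hw
    have : c • f z - c • f w = c • (f z - f w) := by simp [smul_eq_mul]; ring
    simp only [Pi.smul_apply, this, norm_smul, mul_assoc]
    exact mul_le_mul_of_nonneg_left (hC z hz w hw) (norm_nonneg c)
  · intro ε hε
    obtain ⟨δ, hδ, h1⟩ := hl (ε / (‖c‖ + 1)) (by positivity)
    refine ⟨δ, hδ, fun z hz w hw hd => ?_⟩
    have e : c • f z - c • f w = c • (f z - f w) := by simp [smul_eq_mul]; ring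
    simp only [Pi.smul_apply, e, norm_smul]
    have h2 := mul_le_mul_of_nonneg_left (h1 z hz w hw hd) (norm_nonneg c)
    refine h2.trans ?_
    have hc1 : ‖c‖ * (ε / (‖c‖ + 1)) ≤ ε := by
      rw [mul_div_assoc']
      rw [div_le_iff₀ (by positivity)]
      nlinarith [norm_nonneg c]
    calc ‖c‖ * (ε / (‖c‖ + 1) * ‖z - w‖ ^ α) = ‖c‖ * (ε / (‖c‖ + 1)) * ‖z - w‖ ^ α := by ring
      _ ≤ ε * ‖z - w‖ ^ α :=
        mul_le_mul_of_nonneg_right hc1 (Real.rpow_nonneg (norm_nonneg _) _)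

lemma memA_neg (hf : MemA α U f) : MemA α U (-f) := by
  have := memA_smul (-1) hf
  refine memA_congr this ?_
  intro z hz; simp

lemma memA_zero : MemA α U (0 : ℂ → ℂ) := by
  refine ⟨differentiableOn_const 0, continuousOn_const, ⟨0, ?_⟩, fun ε hε => ⟨1, one_pos, ?_⟩⟩
  · intro z hz w hw; simp
  · intro z hz w hw hd
    simp only [Pi.zero_apply, sub_zero, norm_zero]
    positivity

lemma aNorm_smul_le {hα0 : 0 < α} (hUne : (closure U).Nonempty) (hUb : Bornology.IsBounded U)
    (c : ℂ) (hf : MemA α U f) : aNorm α U (c • f) ≤ ‖c‖ * aNorm α U f := by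
  have := aNorm_le_of_bounds (α := α) (f := c • f) hUne
    (B1 := ‖c‖ * supP U f) (B2 := ‖c‖ * holP α U f)
    (mul_nonneg (norm_nonneg c) (holP_nonneg α U f)) ?_ ?_
  · refine this.trans (le_of_eq ?_); rw [aNorm_eq]; ring
  · intro z hz
    simp only [Pi.smul_apply, norm_smul]
    exact mul_le_mul_of_nonneg_left (norm_le_supP hUb hf.2.1 hz) (norm_nonneg c)
  · intro z hz w hw
    have e : c • f z - c • f w = c • (f z - f w) := by simp [smul_eq_mul]; ring
    simp only [Pi.smul_apply, e, norm_smul, mul_assoc]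
    exact mul_le_mul_of_nonneg_left (holder_bound hα0 hf hz hw) (norm_nonneg c)

lemma eq_zero_of_aNorm_eq_zero (hUb : Bornology.IsBounded U) (hf : MemA α U f)
    (h : aNorm α U f = 0) {z : ℂ} (hz : z ∈ closure U) : f z = 0 := by
  have := norm_le_aNorm hUb hf hz
  rw [h] at this
  simpa using le_antisymm this (norm_nonneg _)

end Mem

section Series

variable {α : ℝ} {U : Set ℂ} {g : ℕ → ℂ → ℂ} {v : ℕ → ℝ}

lemma memA_finsum (hg : ∀ j, MemA α U (g j)) (k : ℕ) :
    MemA α U (fun z => ∑ j ∈ Finset.range k, g j z) := by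
  induction k with
  | zero => exact memA_congr memA_zero (by simp)
  | succ k ih =>
    refine memA_congr (memA_add ih (hg k)) ?_
    intro z hz
    simp [Finset.sum_range_succ]

lemma tsum_norm_bound (hb1 : ∀ j z, ‖g j z‖ ≤ v j) (hv : Summable v) (z : ℂ) :
    ‖∑' j, g j z‖ ≤ ∑' j, v j := by
  have hsumn : Summable fun j => ‖g j z‖ :=
    hv.of_nonneg_of_le (fun j => norm_nonneg _) (fun j => hb1 j z)
  exact (norm_tsum_le_tsum_norm hsumn).trans (Summable.tsum_le_tsum (fun j => hb1 j z) hsumn hv)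

lemma tsum_diff_bound (hb1 : ∀ j z, ‖g j z‖ ≤ v j)
    (hb2 : ∀ j, ∀ z ∈ closure U, ∀ w ∈ closure U, ‖g j z - g j w‖ ≤ v j * ‖z - w‖ ^ α)
    (hv : Summable v) {z w : ℂ} (hz : z ∈ closure U) (hw : w ∈ closure U) :
    ‖(∑' j, g j z) - ∑' j, g j w‖ ≤ (∑' j, v j) * ‖z - w‖ ^ α := by
  have hsum : ∀ y : ℂ, Summable fun j => g j y := fun y =>
    Summable.of_norm_bounded hv (fun j => hb1 j y)
  have hmaj : Summable fun j => v j * ‖z - w‖ ^ α := hv.mul_right _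
  have hsd : Summable fun j => ‖g j z - g j w‖ :=
    hmaj.of_nonneg_of_le (fun j => norm_nonneg _) (fun j => hb2 j z hz w hw)
  rw [← Summable.tsum_sub (hsum z) (hsum w)]
  refine (norm_tsum_le_tsum_norm hsd).trans ?_
  refine (Summable.tsum_le_tsum (fun j => hb2 j z hz w hw) hsd hmaj).trans ?_
  rw [tsum_mul_right]

lemma memA_tsum (hα0 : 0 < α) (hUo : IsOpen U) (hUb : Bornology.IsBounded U)
    (hUne : (closure U).Nonempty) (hg : ∀ j, MemA α U (g j))
    (hb1 : ∀ j z, ‖g j z‖ ≤ v j)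
    (hb2 : ∀ j, ∀ z ∈ closure U, ∀ w ∈ closure U, ‖g j z - g j w‖ ≤ v j * ‖z - w‖ ^ α)
    (hv : Summable v) :
    MemA α U (fun z => ∑' j, g j z) ∧ aNorm α U (fun z => ∑' j, g j z) ≤ 2 * ∑' j, v j := by
  set S : ℂ → ℂ := fun z => ∑' j, g j z with hS
  have hsum : ∀ y : ℂ, Summable fun j => g j y := fun y =>
    Summable.of_norm_bounded hv (fun j => hb1 j y)
  set tv : ℕ → ℝ := fun k => ∑' j, v (j + k) with htv
  have htv0 : Tendsto tv atTop (nhds 0) := tendsto_sum_nat_add v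
  have hshift : ∀ k, Summable fun j => v (j + k) := fun k => (summable_nat_add_iff k).2 hv
  have htail : ∀ k z, ‖∑' j, g (j + k) z‖ ≤ tv k := fun k z =>
    tsum_norm_bound (fun j z => hb1 (j + k) z) (hshift k) z
  have hsplit : ∀ k z, S z = (∑ j ∈ Finset.range k, g j z) + ∑' j, g (j + k) z :=
    fun k z => (Summable.sum_add_tsum_nat_add k (hsum z)).symm
  have hunif : TendstoUniformlyOn (fun k z => ∑ j ∈ Finset.range k, g j z) S atTop (closure U) := by
    rw [Metric.tendstoUniformlyOn_iff]
    intro ε hε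
    filter_upwards [htv0.eventually (gt_mem_nhds hε)] with k hk z _
    rw [dist_eq_norm, hsplit k z]
    simpa using (htail k z).trans_lt hk
  have hdiff : ∀ z ∈ closure U, ∀ w ∈ closure U, ‖S z - S w‖ ≤ (∑' j, v j) * ‖z - w‖ ^ α :=
    fun z hz w hw => tsum_diff_bound hb1 hb2 hv hz hw
  have hvnn : 0 ≤ ∑' j, v j :=
    tsum_nonneg (fun j => (norm_nonneg _).trans (hb1 j 0))
  have hmem : MemA α U S := by
    refine ⟨?_, ?_, ⟨∑' j, v j, hdiff⟩, ?_⟩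
    · refine ((hunif.mono subset_closure).tendstoLocallyUniformlyOn).differentiableOn ?_ hUo
      exact Eventually.of_forall fun k => (memA_finsum hg k).1
    · exact hunif.continuousOn (Eventually.of_forall fun k => (memA_finsum hg k).2.1).frequently
    · intro ε hε
      obtain ⟨K, hK⟩ := (htv0.eventually (gt_mem_nhds (by linarith : (0:ℝ) < ε/2))).exists
      obtain ⟨δ, hδ, hδ'⟩ := (memA_finsum hg K).2.2.2 (ε/2) (by linarith)
      refine ⟨δ, hδ, fun z hz w hw hzw => ?_⟩
      have e : S z - S w = ((∑ j ∈ Finset.range K, g j z) - ∑ j ∈ Finset.range K, g j w)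
          + ((∑' j, g (j + K) z) - ∑' j, g (j + K) w) := by
        rw [hsplit K z, hsplit K w]; ring
      conv_lhs => rw [e]
      have h1 := hδ' z hz w hw hzw
      have h2 : ‖(∑' j, g (j + K) z) - ∑' j, g (j + K) w‖ ≤ tv K * ‖z - w‖ ^ α :=
        tsum_diff_bound (fun j z => hb1 (j + K) z)
          (fun j z hz w hw => hb2 (j + K) z hz w hw) (hshift K) hz hw
      have h3 : tv K * ‖z - w‖ ^ α ≤ (ε/2) * ‖z - w‖ ^ α :=
        mul_le_mul_of_nonneg_right hK.le (Real.rpow_nonneg (norm_nonneg _) _)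
      calc ‖_ + _‖ ≤ _ + _ := norm_add_le _ _
        _ ≤ ε/2 * ‖z - w‖ ^ α + ε/2 * ‖z - w‖ ^ α := add_le_add h1 (h2.trans h3)
        _ = ε * ‖z - w‖ ^ α := by ring
  refine ⟨hmem, ?_⟩
  have := aNorm_le_of_bounds (α := α) (f := S) hUne (B1 := ∑' j, v j) (B2 := ∑' j, v j)
    hvnn (fun z _ => tsum_norm_bound hb1 hv z) hdiff
  linarith

end Series

section Id

variable {α : ℝ}

lemma self_le_rpow_mul (hα0 : 0 < α) (hα1 : α < 1) {x B : ℝ} (hx : 0 ≤ x) (hxB : x ≤ B) :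
    x ≤ B ^ (1 - α) * x ^ α := by
  rcases eq_or_lt_of_le hx with rfl | hx'
  · rw [Real.zero_rpow hα0.ne', mul_zero]
  · have e : x = x ^ (1 - α) * x ^ α := by
      rw [← Real.rpow_add hx', sub_add_cancel, Real.rpow_one]
    conv_lhs => rw [e]
    exact mul_le_mul_of_nonneg_right
      (Real.rpow_le_rpow hx hxB (by linarith : (0:ℝ) ≤ 1 - α)) (Real.rpow_nonneg hx α)

lemma memA_id {U : Set ℂ} (hα0 : 0 < α) (hα1 : α < 1) (hUb : Bornology.IsBounded U) :
    MemA α U (fun z : ℂ => z) := by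
  obtain ⟨R, hR⟩ := (hUb.closure).exists_norm_le
  refine ⟨differentiableOn_id, continuousOn_id, ⟨(max (2*R) 0) ^ (1 - α), ?_⟩, ?_⟩
  · intro z hz w hw
    refine self_le_rpow_mul hα0 hα1 (norm_nonneg _) ?_
    refine le_max_of_le_left ?_
    calc ‖z - w‖ ≤ ‖z‖ + ‖w‖ := norm_sub_le _ _
      _ ≤ 2 * R := by linarith [hR z hz, hR w hw]
  · intro ε hε
    refine ⟨ε ^ ((1 - α)⁻¹), Real.rpow_pos_of_pos hε _, ?_⟩
    intro z hz w hw hzw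
    have h1 : ‖z - w‖ ≤ (ε ^ ((1 - α)⁻¹)) ^ (1 - α) * ‖z - w‖ ^ α :=
      self_le_rpow_mul hα0 hα1 (norm_nonneg _) hzw.le
    have h2 : (ε ^ ((1 - α)⁻¹)) ^ (1 - α) = ε := by
      rw [← Real.rpow_mul hε.le, inv_mul_cancel₀ (by linarith : (1:ℝ) - α ≠ 0), Real.rpow_one]
    simpa [h2] using h1

end Id

/-- `D` is a bounded (continuous) point derivation on `A_α(U)` at `b`. -/
def IsBoundedPointDerivation (α : ℝ) (U : Set ℂ) (b : ℂ) (D : (ℂ → ℂ) → ℂ) : Prop :=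
  (∀ f g : ℂ → ℂ, MemA α U f → MemA α U g → D (f + g) = D f + D g) ∧
  (∀ (c : ℂ) (f : ℂ → ℂ), MemA α U f → D (c • f) = c * D f) ∧
  (∃ M : ℝ, 0 < M ∧ ∀ f : ℂ → ℂ, MemA α U f → ‖D f‖ ≤ M * aNorm α U f) ∧
  (∀ f g : ℂ → ℂ, MemA α U f → MemA α U g → D (f * g) = f b * D g + g b * D f)

/-- if there is a sequence aₙ ∈ U, aₙ → b, along which the difference
quotients (f(aₙ)-f(b))/(aₙ-b) are bounded for each f ∈ A_α(U), then A_α(U) admits a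
nonzero bounded point derivation at b. -/
theorem bounded_quotients_give_derivation (α : ℝ) (hα0 : 0 < α) (hα1 : α < 1)
    (U : Set ℂ) (hUo : IsOpen U) (hUb : Bornology.IsBounded U)
    (b : ℂ) (hb : b ∈ frontier U)
    (a : ℕ → ℂ) (haU : ∀ n, a n ∈ U) (hab : Tendsto a atTop (nhds b))
    (hbdd : ∀ f : ℂ → ℂ, MemA α U f →
      ∃ M : ℝ, ∀ n, ‖(f (a n) - f b) / (a n - b)‖ ≤ M) :
    ∃ D : (ℂ → ℂ) → ℂ, IsBoundedPointDerivation α U b D ∧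
      ∃ f : ℂ → ℂ, MemA α U f ∧ D f ≠ 0 := by
  classical
  have hbcl : b ∈ closure U := frontier_subset_closure hb
  have hbU : b ∉ U := by
    rw [hUo.frontier_eq] at hb
    exact hb.2
  have hanb : ∀ n, a n - b ≠ 0 := fun n => sub_ne_zero.2 (fun h => hbU (h ▸ haU n))
  have hUne : (closure U).Nonempty := ⟨a 0, subset_closure (haU 0)⟩
  set q : ℕ → (ℂ → ℂ) → ℂ := fun n f => (f (a n) - f b) / (a n - b) with hq
  set Φ : Filter ℕ := ↑(Ultrafilter.of (atTop : Filter ℕ)) with hΦ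
  have hΦle : Φ ≤ atTop := Ultrafilter.of_le _
  haveI hΦne : Φ.NeBot := by rw [hΦ]; infer_instance
  set D : (ℂ → ℂ) → ℂ := fun f => limUnder Φ (fun n => q n f) with hD
  have hTend : ∀ f, MemA α U f → Tendsto (fun n => q n f) Φ (nhds (D f)) := by
    intro f hf
    obtain ⟨M, hM⟩ := hbdd f hf
    have hball : ∀ n, q n f ∈ closedBall (0:ℂ) (max M 0) := by
      intro n
      rw [mem_closedBall, dist_zero_right]
      exact le_max_of_le_left (hM n)
    set u : Ultrafilter ℂ := (Ultrafilter.of (atTop : Filter ℕ)).map (fun n => q n f) with hu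
    have hle : ↑u ≤ 𝓟 (closedBall (0:ℂ) (max M 0)) := by
      rw [hu, le_principal_iff]
      exact Filter.mem_map.2 (Filter.univ_mem' hball)
    obtain ⟨x, -, hx⟩ := (isCompact_closedBall _ _).ultrafilter_le_nhds u hle
    have hx' : Tendsto (fun n => q n f) Φ (nhds x) := hx
    exact tendsto_nhds_limUnder ⟨x, hx'⟩
  have hqb : ∀ n f, MemA α U f → ‖q n f‖ ≤ aNorm α U f * ‖a n - b‖ ^ (α - 1) := by
    intro n f hf
    have hd : (0:ℝ) < ‖a n - b‖ := by simpa [norm_pos_iff] using hanb n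
    have h1 : ‖f (a n) - f b‖ ≤ aNorm α U f * ‖a n - b‖ ^ α :=
      holder_bound' hα0 hf (subset_closure (haU n)) hbcl
    have h2 : ‖q n f‖ = ‖f (a n) - f b‖ / ‖a n - b‖ := by rw [hq]; exact norm_div _ _
    rw [h2, div_le_iff₀ hd]
    calc ‖f (a n) - f b‖ ≤ aNorm α U f * ‖a n - b‖ ^ α := h1
      _ = aNorm α U f * ‖a n - b‖ ^ (α - 1) * ‖a n - b‖ := by
          rw [mul_assoc, ← Real.rpow_add_one hd.ne' (α - 1)]
          ring_nf
  -- derivation identities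
  have hadd : ∀ f g : ℂ → ℂ, MemA α U f → MemA α U g → D (f + g) = D f + D g := by
    intro f g hf hg
    have h1 : (fun n => q n (f + g)) = fun n => q n f + q n g := by
      funext n
      rw [hq]
      simp only [Pi.add_apply]
      ring
    have h2 : Tendsto (fun n => q n (f + g)) Φ (nhds (D f + D g)) := by
      rw [h1]; exact (hTend f hf).add (hTend g hg)
    exact h2.limUnder_eq
  have hsmul : ∀ (c : ℂ) (f : ℂ → ℂ), MemA α U f → D (c • f) = c * D f := by
    intro c f hf
    have h1 : (fun n => q n (c • f)) = fun n => c * q n f := by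
      funext n
      rw [hq]
      simp only [Pi.smul_apply, smul_eq_mul]
      ring
    have h2 : Tendsto (fun n => q n (c • f)) Φ (nhds (c * D f)) := by
      rw [h1]; exact tendsto_const_nhds.mul (hTend f hf)
    exact h2.limUnder_eq
  have hmul : ∀ f g : ℂ → ℂ, MemA α U f → MemA α U g →
      D (f * g) = f b * D g + g b * D f := by
    intro f g hf hg
    have h1 : (fun n => q n (f * g)) = fun n => f (a n) * q n g + g b * q n f := by
      funext n
      rw [hq]
      simp only [Pi.mul_apply]
      field_simp
      ring
    have hfa : Tendsto (fun n => f (a n)) Φ (nhds (f b)) := by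
      have hca : ContinuousWithinAt f (closure U) b := hf.2.1 b hbcl
      refine hca.tendsto.comp ?_
      rw [tendsto_nhdsWithin_iff]
      exact ⟨hab.mono_left hΦle, Eventually.of_forall fun n => subset_closure (haU n)⟩
    have h2 : Tendsto (fun n => q n (f * g)) Φ (nhds (f b * D g + g b * D f)) := by
      rw [h1]
      exact (hfa.mul (hTend g hg)).add (tendsto_const_nhds.mul (hTend f hf))
    exact h2.limUnder_eq
  -- nonzero witness
  have hidmem : MemA α U (fun z : ℂ => z) := memA_id hα0 hα1 hUb
  have hDid : D (fun z : ℂ => z) = 1 := by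
    have h1 : (fun n => q n (fun z : ℂ => z)) = fun _ => (1:ℂ) := by
      funext n
      rw [hq]
      exact div_self (hanb n)
    have h2 : Tendsto (fun n => q n (fun z : ℂ => z)) Φ (nhds 1) := by
      rw [h1]; exact tendsto_const_nhds
    exact h2.limUnder_eq
  have hbound : ∃ M : ℝ, 0 < M ∧ ∀ f : ℂ → ℂ, MemA α U f → ‖D f‖ ≤ M * aNorm α U f := by
    by_contra hcon
    push_neg at hcon
    set QS : ℕ → Set ℝ := fun n => {r | ∃ f, MemA α U f ∧ aNorm α U f ≤ 1 ∧ r = ‖q n f‖}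
      with hQS
    set N : ℕ → ℝ := fun n => sSup (QS n) with hNdef
    have hq00 : ∀ n, q n (0 : ℂ → ℂ) = 0 := by intro n; rw [hq]; simp
    have hz1 : aNorm α U (0 : ℂ → ℂ) ≤ 1 := by
      have h := aNorm_le_of_bounds (α := α) (f := (0:ℂ→ℂ)) hUne (B1 := 0) (B2 := 0) le_rfl
        (fun z _ => by simp) (fun z _ w _ => by simp)
      linarith
    have hQSbdd : ∀ n, BddAbove (QS n) := by
      intro n
      refine ⟨‖a n - b‖ ^ (α - 1), ?_⟩
      rintro r ⟨f, hf, h1, rfl⟩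
      refine (hqb n f hf).trans ?_
      have h2 : (0:ℝ) ≤ ‖a n - b‖ ^ (α - 1) := Real.rpow_nonneg (norm_nonneg _) _
      nlinarith
    have hQSne : ∀ n, (QS n).Nonempty := fun n => ⟨‖q n 0‖, 0, memA_zero, hz1, rfl⟩
    have hN0 : ∀ n, 0 ≤ N n := by
      intro n
      have h0 : (0:ℝ) ∈ QS n := ⟨0, memA_zero, hz1, by rw [hq00]; simp⟩
      exact le_csSup (hQSbdd n) h0
    have hqN : ∀ n (f : ℂ → ℂ), MemA α U f → ‖q n f‖ ≤ N n * aNorm α U f := by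
      intro n f hf
      rcases eq_or_lt_of_le (aNorm_nonneg α U f) with h0 | htpos
      · have hz : ∀ z ∈ closure U, f z = 0 :=
          fun z hz => eq_zero_of_aNorm_eq_zero hUb hf h0.symm hz
        have hqz : q n f = 0 := by
          simp only [hq]
          rw [hz _ (subset_closure (haU n)), hz _ hbcl]
          simp
        rw [hqz, norm_zero]
        exact mul_nonneg (hN0 n) (aNorm_nonneg α U f)
      · set t := aNorm α U f with ht
        set f' : ℂ → ℂ := ((t:ℂ))⁻¹ • f with hf'def
        have hf' : MemA α U f' := memA_smul _ hf
        have hscal : ‖((t:ℂ))⁻¹‖ = t⁻¹ := by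
          rw [norm_inv, Complex.norm_real, Real.norm_eq_abs, abs_of_pos htpos]
        have ha' : aNorm α U f' ≤ 1 := by
          refine (aNorm_smul_le (hα0 := hα0) hUne hUb _ hf).trans ?_
          rw [hscal, ← ht, inv_mul_cancel₀ htpos.ne']
        have h2 : q n f' = ((t:ℂ))⁻¹ * q n f := by
          rw [hq]
          simp only [hf'def, Pi.smul_apply, smul_eq_mul]
          ring
        have h3 : ‖q n f'‖ = t⁻¹ * ‖q n f‖ := by rw [h2, norm_mul, hscal]
        calc ‖q n f‖ = t * (t⁻¹ * ‖q n f‖) := by field_simp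
          _ = t * ‖q n f'‖ := by rw [h3]
          _ ≤ t * N n :=
            mul_le_mul_of_nonneg_left (le_csSup (hQSbdd n) ⟨f', hf', ha', rfl⟩) htpos.le
          _ = N n * t := mul_comm _ _
    have hNun : ∀ M : ℝ, ∃ n, M < N n := by
      intro M
      obtain ⟨f, hf, hMf⟩ := hcon (max M 1) (lt_of_lt_of_le one_pos (le_max_right M 1))
      have hfa0 : 0 < aNorm α U f := by
        rcases eq_or_lt_of_le (aNorm_nonneg α U f) with h0 | h
        swap
        · exact h
        exfalso
        have hz : ∀ z ∈ closure U, f z = 0 :=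
          fun z hz => eq_zero_of_aNorm_eq_zero hUb hf h0.symm hz
        have hq0' : (fun n => q n f) = fun _ => (0:ℂ) := by
          funext n
          simp only [hq]
          rw [hz _ (subset_closure (haU n)), hz _ hbcl]
          simp
        have hDf : D f = 0 := by
          have h5 : Tendsto (fun n => q n f) Φ (nhds 0) := by
            rw [hq0']
            exact tendsto_const_nhds
          exact h5.limUnder_eq
        rw [hDf, ← h0] at hMf
        simp at hMf
      have hnorm : Tendsto (fun n => ‖q n f‖) Φ (nhds ‖D f‖) := (hTend f hf).norm
      obtain ⟨n, hn⟩ := (hnorm.eventually (eventually_gt_nhds hMf)).exists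
      refine ⟨n, lt_of_le_of_lt (le_max_left M 1) ?_⟩
      exact (mul_lt_mul_iff_left₀ hfa0).1 (lt_of_lt_of_le hn (hqN n f hf))
    -- gliding hump step
    have hstep : ∀ (x : ℂ → ℂ) (k : ℕ), ∃ (gk : ℂ → ℂ) (n : ℕ),
        MemA α U gk ∧ (∀ z, z ∉ closure U → gk z = 0) ∧
        (∀ z, ‖gk z‖ ≤ (4:ℝ)⁻¹ ^ k) ∧
        (∀ z ∈ closure U, ∀ w ∈ closure U, ‖gk z - gk w‖ ≤ (4:ℝ)⁻¹ ^ k * ‖z - w‖ ^ α) ∧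
        (48:ℝ) ^ k < N n ∧ 3/4 * ((4:ℝ)⁻¹ ^ k * N n) ≤ ‖q n (x + gk)‖ := by
      intro x k
      obtain ⟨n, hn⟩ := hNun ((48:ℝ) ^ k)
      have hNpos : 0 < N n := lt_of_le_of_lt (by positivity) hn
      obtain ⟨r, hrQS, hr⟩ := exists_lt_of_lt_csSup (hQSne n)
        (by linarith : 3/4 * N n < N n)
      obtain ⟨f, hf, hf1, rfl⟩ := hrQS
      set c : ℝ := (4:ℝ)⁻¹ ^ k with hc
      have hcpos : (0:ℝ) < c := by positivity
      set y : ℂ → ℂ := fun z => if z ∈ closure U then (c:ℂ) * f z else 0 with hy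
      have hyeq : ∀ z ∈ closure U, y z = ((c:ℂ) • f) z := by
        intro z hz; simp [hy, hz]
      have hymem : MemA α U y := memA_congr (memA_smul _ hf) hyeq
      have hy0 : ∀ z, z ∉ closure U → y z = 0 := by intro z hz; simp [hy, hz]
      have hnormc : ‖((c:ℝ):ℂ)‖ = c := by
        rw [Complex.norm_real, Real.norm_eq_abs, abs_of_pos hcpos]
      have hysup : ∀ z, ‖y z‖ ≤ c := by
        intro z
        by_cases hz : z ∈ closure U
        · rw [hyeq z hz]
          simp only [Pi.smul_apply, smul_eq_mul, norm_mul, hnormc]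
          calc c * ‖f z‖ ≤ c * 1 :=
                mul_le_mul_of_nonneg_left ((norm_le_aNorm hUb hf hz).trans hf1) hcpos.le
            _ = c := mul_one c
        · rw [hy0 z hz]; simp [hcpos.le]
      have hyhol : ∀ z ∈ closure U, ∀ w ∈ closure U, ‖y z - y w‖ ≤ c * ‖z - w‖ ^ α := by
        intro z hz w hw
        rw [hyeq z hz, hyeq w hw]
        simp only [Pi.smul_apply, smul_eq_mul]
        rw [← mul_sub, norm_mul, hnormc]
        calc c * ‖f z - f w‖ ≤ c * (aNorm α U f * ‖z - w‖ ^ α) :=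
              mul_le_mul_of_nonneg_left (holder_bound' hα0 hf hz hw) hcpos.le
          _ ≤ c * (1 * ‖z - w‖ ^ α) := by
              have h7 := Real.rpow_nonneg (norm_nonneg (z - w)) α
              exact mul_le_mul_of_nonneg_left
                (mul_le_mul_of_nonneg_right hf1 h7) hcpos.le
          _ = c * ‖z - w‖ ^ α := by ring
      have hqy : q n y = (c:ℂ) * q n f := by
        simp only [hq]
        rw [hyeq _ (subset_closure (haU n)), hyeq _ hbcl]
        simp only [Pi.smul_apply, smul_eq_mul]
        ring
      have hqynorm : 3/4 * (c * N n) ≤ ‖q n y‖ := by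
        rw [hqy, norm_mul, hnormc]
        calc 3/4 * (c * N n) = c * (3/4 * N n) := by ring
          _ ≤ c * ‖q n f‖ := mul_le_mul_of_nonneg_left hr.le hcpos.le
      have hqadd : q n (x + y) = q n x + q n y := by
        simp only [hq, Pi.add_apply]; ring
      have hqsub : q n (x + (-y)) = q n x - q n y := by
        simp only [hq, Pi.add_apply, Pi.neg_apply]; ring
      rcases le_or_gt (3/4 * (c * N n)) ‖q n (x + y)‖ with hcase | hcase
      · exact ⟨y, n, hymem, hy0, hysup, hyhol, hn, hcase⟩
      · refine ⟨-y, n, memA_neg hymem, ?_, ?_, ?_, hn, ?_⟩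
        · intro z hz; simp [Pi.neg_apply, hy0 z hz]
        · intro z; simpa using hysup z
        · intro z hz w hw
          have e : (-y) z - (-y) w = y w - y z := by simp only [Pi.neg_apply]; ring
          rw [e]
          have h8 := hyhol w hw z hz
          rwa [norm_sub_rev w z] at h8
        · rw [hqadd] at hcase
          have e3 : q n y + q n y = (q n x + q n y) - (q n x - q n y) := by ring
          have h2 : ‖q n y + q n y‖ ≤ ‖q n x + q n y‖ + ‖q n x - q n y‖ := by
            rw [e3]; exact norm_sub_le _ _
          have h3 : ‖q n y + q n y‖ = 2 * ‖q n y‖ := by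
            have e4 : q n y + q n y = (2:ℂ) * q n y := by ring
            rw [e4, norm_mul]
            norm_num
          rw [hqsub]
          linarith
    -- recursive construction
    choose g0 n0 hg1 hg2 hg3 hg4 hg5 hg6 using hstep
    set T : ℕ → (ℂ → ℂ) × ((ℂ → ℂ) × ℕ) := fun k =>
      Nat.rec (motive := fun _ => (ℂ → ℂ) × ((ℂ → ℂ) × ℕ))
        ⟨(0:ℂ→ℂ) + g0 0 0, g0 0 0, n0 0 0⟩
        (fun k ih => ⟨ih.1 + g0 ih.1 (k+1), g0 ih.1 (k+1), n0 ih.1 (k+1)⟩) k with hT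
    set gs : ℕ → ℂ → ℂ := fun k => (T k).2.1 with hgsdef
    set ns : ℕ → ℕ := fun k => (T k).2.2 with hnsdef
    set xs : ℕ → ℂ → ℂ := fun k => (T k).1 with hxsdef
    have hprops : ∀ k, MemA α U (gs k) ∧ (∀ z, z ∉ closure U → gs k z = 0) ∧
        (∀ z, ‖gs k z‖ ≤ (4:ℝ)⁻¹ ^ k) ∧
        (∀ z ∈ closure U, ∀ w ∈ closure U, ‖gs k z - gs k w‖ ≤ (4:ℝ)⁻¹ ^ k * ‖z - w‖ ^ α) ∧
        (48:ℝ) ^ k < N (ns k) ∧ 3/4 * ((4:ℝ)⁻¹ ^ k * N (ns k)) ≤ ‖q (ns k) (xs k)‖ := by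
      intro k
      cases k with
      | zero => exact ⟨hg1 0 0, hg2 0 0, hg3 0 0, hg4 0 0, hg5 0 0, hg6 0 0⟩
      | succ k =>
        exact ⟨hg1 (xs k) (k+1), hg2 (xs k) (k+1), hg3 (xs k) (k+1), hg4 (xs k) (k+1),
          hg5 (xs k) (k+1), hg6 (xs k) (k+1)⟩
    have hxmem : ∀ k, MemA α U (xs k) := by
      intro k
      induction k with
      | zero => exact memA_add memA_zero (hprops 0).1
      | succ k ih => exact memA_add ih (hprops (k+1)).1
    have hxsum : ∀ k, ∀ z, xs k z = ∑ j ∈ Finset.range (k+1), gs j z := by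
      intro k
      induction k with
      | zero =>
        intro z
        have e : xs 0 = (0:ℂ→ℂ) + gs 0 := rfl
        rw [e]
        simp [Finset.sum_range_one]
      | succ k ih =>
        intro z
        have e : xs (k+1) = xs k + gs (k+1) := rfl
        rw [e]
        simp only [Pi.add_apply, ih z, Finset.sum_range_succ]
    have hv : Summable (fun j => (4:ℝ)⁻¹ ^ j) :=
      summable_geometric_of_lt_one (by norm_num) (by norm_num)
    obtain ⟨hSmem, hSnorm⟩ := memA_tsum (g := gs) (v := fun j => (4:ℝ)⁻¹ ^ j)
      hα0 hUo hUb hUne (fun j => (hprops j).1)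
      (fun j z => (hprops j).2.2.1 z) (fun j => (hprops j).2.2.2.1) hv
    set S : ℂ → ℂ := fun z => ∑' j, gs j z with hS
    obtain ⟨M, hM⟩ := hbdd S hSmem
    have hM' : ∀ m, ‖q m S‖ ≤ M := hM
    have hsum' : ∀ z, Summable fun j => gs j z := fun z =>
      Summable.of_norm_bounded hv (fun j => (hprops j).2.2.1 z)
    have hfin : ∀ k, (12:ℝ) ^ k / 12 ≤ M := by
      intro k
      set tail : ℂ → ℂ := fun z => ∑' j, gs (j + (k+1)) z with htail
      have hv' : Summable (fun j => (4:ℝ)⁻¹ ^ (j + (k+1))) :=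
        (summable_nat_add_iff (k+1)).2 hv
      obtain ⟨htmem, htnorm⟩ := memA_tsum (g := fun j => gs (j + (k+1)))
        (v := fun j => (4:ℝ)⁻¹ ^ (j + (k+1)))
        hα0 hUo hUb hUne (fun j => (hprops (j + (k+1))).1)
        (fun j z => (hprops (j + (k+1))).2.2.1 z)
        (fun j => (hprops (j + (k+1))).2.2.2.1) hv'
      have hgeo : (∑' j, (4:ℝ)⁻¹ ^ (j + (k+1))) = (4:ℝ)⁻¹ ^ k * (1/3) := by
        have e1 : ∀ j, (4:ℝ)⁻¹ ^ (j + (k+1)) = (4:ℝ)⁻¹ ^ j * (4:ℝ)⁻¹ ^ (k+1) :=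
          fun j => pow_add _ _ _
        simp_rw [e1]
        rw [tsum_mul_right, tsum_geometric_of_lt_one (by norm_num) (by norm_num), pow_succ]
        norm_num
        ring
      have hsplit : ∀ z, S z = xs k z + tail z := by
        intro z
        have e2 := (Summable.sum_add_tsum_nat_add (k+1) (hsum' z)).symm
        show (∑' j, gs j z) = xs k z + tail z
        rw [hxsum k z]
        exact e2
      have hqsplit : q (ns k) S = q (ns k) (xs k) + q (ns k) tail := by
        simp only [hq]
        rw [hsplit (a (ns k)), hsplit b]
        ring
      have h6 := (hprops k).2.2.2.2.2
      have h5 := (hprops k).2.2.2.2.1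
      have hqt : ‖q (ns k) tail‖ ≤ N (ns k) * (2 * ((4:ℝ)⁻¹ ^ k * (1/3))) := by
        refine (hqN (ns k) tail htmem).trans ?_
        refine mul_le_mul_of_nonneg_left ?_ (hN0 _)
        refine htnorm.trans ?_
        rw [hgeo]
      have htri : ‖q (ns k) (xs k)‖ ≤ ‖q (ns k) S‖ + ‖q (ns k) tail‖ := by
        have e2 : q (ns k) (xs k) = q (ns k) S - q (ns k) tail := by
          rw [hqsplit]; ring
        calc ‖q (ns k) (xs k)‖ = ‖q (ns k) S - q (ns k) tail‖ := by rw [e2]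
          _ ≤ ‖q (ns k) S‖ + ‖q (ns k) tail‖ := norm_sub_le _ _
      have hMk := hM' (ns k)
      have h4nn : (0:ℝ) ≤ (4:ℝ)⁻¹ ^ k := by positivity
      have key : (4:ℝ)⁻¹ ^ k * (48:ℝ) ^ k ≤ (4:ℝ)⁻¹ ^ k * N (ns k) :=
        mul_le_mul_of_nonneg_left h5.le h4nn
      have hpow : (4:ℝ)⁻¹ ^ k * (48:ℝ) ^ k = 12 ^ k := by
        rw [← mul_pow]; norm_num
      rw [hpow] at key
      linarith
    obtain ⟨k, hk⟩ := pow_unbounded_of_one_lt (M * 12) (by norm_num : (1:ℝ) < 12)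
    have hfk := hfin k
    linarith
  exact ⟨D, ⟨hadd, hsmul, hbound, hmul⟩, (fun z : ℂ => z), hidmem, by rw [hDid]; exact one_ne_zero⟩
end
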